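/- arXiv:2508.00111 — 10 statements merged into one kernel-verified Lean document; each statement's English description precedes it below -/
import Mathlib

section
/- If A ∈ H_n is a positive semidefinite Hermitian matrix of rank one, then for every B = [b_{i,j}] ∈ H_n one has per(A∘B) ≤ per(A)·∏_{i=1}^n b_{i,i} (both sides being real numbers, since the permanent of a positive semidefinite Hermitian matrix is a nonnegative real and the diagonal entries b_{i,i} are nonnegative reals). -/
open Matrix Finset
open scoped ComplexOrder

lemma psd_abs_apply_le {n : ℕ} {B : Matrix (Fin n) (Fin n) ℂ} (hB : B.PosSemidef)
    (i j : Fin n) :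
    ‖B i j‖ ≤ Real.sqrt (B i i).re * Real.sqrt (B j j).re := by
  have hex : ∃ C : Matrix (Fin n) (Fin n) ℂ, B = Cᴴ * C := by
    open scoped MatrixOrder in
    exact ⟨CFC.sqrt B, by
      have h0 : (0 : Matrix (Fin n) (Fin n) ℂ) ≤ B := Matrix.nonneg_iff_posSemidef.mpr hB
      rw [(CFC.sqrt_nonneg B).posSemidef.isHermitian.eq, CFC.sqrt_mul_sqrt_self B h0]⟩
  obtain ⟨C, rfl⟩ := hex
  set x : EuclideanSpace ℂ (Fin n) := WithLp.toLp 2 (fun k => C k i) with hx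
  set y : EuclideanSpace ℂ (Fin n) := WithLp.toLp 2 (fun k => C k j) with hy
  have key : ∀ a b : Fin n, ∀ u v : EuclideanSpace ℂ (Fin n),
      (∀ k, u k = C k a) → (∀ k, v k = C k b) → (Cᴴ * C) a b = inner ℂ u v := by
    intro a b u v hu hv
    simp only [Matrix.mul_apply, Matrix.conjTranspose_apply, PiLp.inner_apply,
      RCLike.inner_apply, hu, hv, starRingEnd_apply]
    exact Finset.sum_congr rfl fun _ _ => mul_comm _ _
  have hxy : (Cᴴ * C) i j = inner ℂ x y := key i j x y (fun _ => rfl) (fun _ => rfl)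
  have hxx : ((Cᴴ * C) i i).re = ‖x‖ ^ 2 := by
    rw [key i i x x (fun _ => rfl) (fun _ => rfl), inner_self_eq_norm_sq_to_K]
    norm_cast
  have hyy : ((Cᴴ * C) j j).re = ‖y‖ ^ 2 := by
    rw [key j j y y (fun _ => rfl) (fun _ => rfl), inner_self_eq_norm_sq_to_K]
    norm_cast
  rw [hxy, hxx, hyy, Real.sqrt_sq (norm_nonneg _), Real.sqrt_sq (norm_nonneg _)]
  exact norm_inner_le_norm x y

lemma psd_diag_re_nonneg {n : ℕ} {B : Matrix (Fin n) (Fin n) ℂ} (hB : B.PosSemidef)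
    (i : Fin n) : 0 ≤ (B i i).re := by
  have := hB.re_dotProduct_nonneg (Pi.single i 1)
  simpa [dotProduct, Matrix.mulVec_single, Pi.single_apply, Finset.sum_ite_eq] using this

lemma perm_re_le {n : ℕ} {B : Matrix (Fin n) (Fin n) ℂ} (hB : B.PosSemidef) :
    B.permanent.re ≤ ((Nat.factorial n) : ℝ) * ∏ i, (B i i).re := by
  have h1 : B.permanent.re ≤ ‖B.permanent‖ := Complex.re_le_norm _
  refine h1.trans ?_
  rw [Matrix.permanent]
  refine (norm_sum_le _ _).trans ?_
  have hterm : ∀ σ : Equiv.Perm (Fin n),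
      ‖∏ i, B (σ i) i‖ ≤ ∏ i, (B i i).re := by
    intro σ
    rw [norm_prod]
    have step : ∀ i ∈ Finset.univ, ‖B (σ i) i‖ ≤
        Real.sqrt (B (σ i) (σ i)).re * Real.sqrt (B i i).re :=
      fun i _ => psd_abs_apply_le hB (σ i) i
    refine (Finset.prod_le_prod (fun i _ => norm_nonneg _) step).trans_eq ?_
    rw [Finset.prod_mul_distrib, Equiv.prod_comp σ (fun i => Real.sqrt (B i i).re),
      ← Finset.prod_mul_distrib]
    exact Finset.prod_congr rfl fun i _ => Real.mul_self_sqrt (psd_diag_re_nonneg hB i)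
  refine (Finset.sum_le_sum fun σ _ => hterm σ).trans_eq ?_
  rw [Finset.sum_const, Finset.card_univ, Fintype.card_perm, nsmul_eq_mul, Fintype.card_fin]

/-- If `A` is a rank-one positive semidefinite Hermitian matrix, then for every
positive semidefinite Hermitian `B` one has `per(A ∘ B) ≤ per(A) · ∏ i, B i i`
(as real numbers). -/
theorem stmt0 {n : ℕ} (A : Matrix (Fin n) (Fin n) ℂ) (hA : A.PosSemidef) (hrank : A.rank = 1)
    (B : Matrix (Fin n) (Fin n) ℂ) (hB : B.PosSemidef) :
    (Matrix.hadamard A B).permanent.re ≤ A.permanent.re * ∏ i, (B i i).re := by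
  -- extract rank-one structure
  rw [Matrix.rank, finrank_eq_one_iff'] at hrank
  obtain ⟨⟨v, hv_mem⟩, hv0, hv⟩ := hrank
  have hcol : ∀ j : Fin n, ∃ c : ℂ, ∀ i, A i j = c * v i := by
    intro j
    obtain ⟨c, hc⟩ := hv ⟨A.mulVec (Pi.single j 1), LinearMap.mem_range_self _ _⟩
    refine ⟨c, fun i => ?_⟩
    have := congrFun (congrArg Subtype.val hc) i
    simp only [Submodule.coe_smul_of_tower, SetLike.val_smul, Pi.smul_apply, smul_eq_mul] at this
    rw [this]
    simp [Matrix.mulVec_single]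
  choose c hc using hcol
  set r : ℝ := ∏ i, (A i i).re with hr
  have hAdiag : ∀ i, A i i = ((A i i).re : ℂ) := fun i =>
    (hA.isHermitian.coe_re_apply_self i).symm
  have hd : ∏ i, A i i = (r : ℂ) := by
    rw [hr]; push_cast
    exact Finset.prod_congr rfl fun i _ => hAdiag i
  have hprod : ∀ σ : Equiv.Perm (Fin n), ∏ i, A (σ i) i = (r : ℂ) := by
    intro σ
    have : ∏ i, A (σ i) i = (∏ i, c i) * ∏ i, v (σ i) := by
      rw [← Finset.prod_mul_distrib]
      exact Finset.prod_congr rfl fun i _ => hc i (σ i)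
    rw [this, Equiv.prod_comp σ v, ← hd, ← Finset.prod_mul_distrib]
    exact (Finset.prod_congr rfl fun i _ => (hc i i).symm)
  have hperA : A.permanent = ((Nat.factorial n) : ℂ) * r := by
    rw [Matrix.permanent]
    simp only [hprod]
    rw [Finset.sum_const, Finset.card_univ, Fintype.card_perm, nsmul_eq_mul, Fintype.card_fin]
  have hperAB : (Matrix.hadamard A B).permanent = (r : ℂ) * B.permanent := by
    rw [Matrix.permanent, Matrix.permanent, Finset.mul_sum]
    refine Finset.sum_congr rfl fun σ _ => ?_
    rw [← hprod σ, ← Finset.prod_mul_distrib]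
    exact Finset.prod_congr rfl fun i _ => rfl
  have hr0 : 0 ≤ r := Finset.prod_nonneg fun i _ => psd_diag_re_nonneg hA i
  rw [hperAB, hperA]
  have h1 : ((r : ℂ) * B.permanent).re = r * B.permanent.re := by
    simp [Complex.mul_re]
  have h2 : (((Nat.factorial n) : ℂ) * (r : ℂ)).re = ((Nat.factorial n) : ℝ) * r := by
    simp
  rw [h1, h2]
  calc r * B.permanent.re ≤ r * (((Nat.factorial n) : ℝ) * ∏ i, (B i i).re) :=
        mul_le_mul_of_nonneg_left (perm_re_le hB) hr0
    _ = ((Nat.factorial n) : ℝ) * r * ∏ i, (B i i).re := by ring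
end

section
/- If A ∈ H_n has all entries nonnegative real numbers (a_{i,j} ≥ 0 for all i, j), then for every B = [b_{i,j}] ∈ H_n one has per(A∘B) ≤ per(A)·∏_{i=1}^n b_{i,i} (both sides being real numbers, since the permanent of a positive semidefinite Hermitian matrix is a nonnegative real and the diagonal entries b_{i,i} are nonnegative reals). -/
open Matrix Finset
open scoped ComplexOrder InnerProductSpace

open scoped MatrixOrder in
lemma cauchy_schwarz_entry {n : ℕ} (B : Matrix (Fin n) (Fin n) ℂ) (hB : B.PosSemidef)
    (i j : Fin n) :
    ‖B i j‖ ≤ Real.sqrt (B i i).re * Real.sqrt (B j j).re := by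
  obtain ⟨M, rfl⟩ := CStarAlgebra.nonneg_iff_eq_star_mul_self.mp hB.nonneg
  rw [Matrix.star_eq_conjTranspose]
  set z : Fin n → EuclideanSpace ℂ (Fin n) := fun a => WithLp.toLp 2 (fun k => M k a) with hz
  have hin : ∀ a b : Fin n, (Mᴴ * M) a b = ⟪z a, z b⟫_ℂ := by
    intro a b
    simp [Matrix.mul_apply, Matrix.conjTranspose_apply, PiLp.inner_apply, hz, mul_comm]
  have h1 : ‖(Mᴴ * M) i j‖ = ‖⟪z i, z j⟫_ℂ‖ := by rw [hin]
  have h2 : Real.sqrt ((Mᴴ * M) i i).re = ‖z i‖ := by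
    rw [hin, @norm_eq_sqrt_re_inner ℂ]; rfl
  have h3 : Real.sqrt ((Mᴴ * M) j j).re = ‖z j‖ := by
    rw [hin, @norm_eq_sqrt_re_inner ℂ]; rfl
  rw [h1, h2, h3]
  exact norm_inner_le_norm (z i) (z j)

/-- If `A` is positive semidefinite Hermitian with all entries nonnegative reals,
then for every positive semidefinite Hermitian `B` one has
`per(A ∘ B) ≤ per(A) · ∏ i, B i i` (as real numbers). -/
theorem stmt1 {n : ℕ} (A : Matrix (Fin n) (Fin n) ℂ) (hA : A.PosSemidef)
    (hAnonneg : ∀ i j, (A i j).im = 0 ∧ 0 ≤ (A i j).re)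
    (B : Matrix (Fin n) (Fin n) ℂ) (hB : B.PosSemidef) :
    (Matrix.hadamard A B).permanent.re ≤ A.permanent.re * ∏ i, (B i i).re := by
  have hBdiag : ∀ i, 0 ≤ (B i i).re := by
    intro i
    have h := hB.dotProduct_mulVec_nonneg (Pi.single i 1)
    have : star (Pi.single i 1 : Fin n → ℂ) ⬝ᵥ B *ᵥ Pi.single i 1 = B i i := by
      simp [dotProduct, Matrix.mulVec, Pi.single_apply, apply_ite, mul_comm]
    rw [this] at h
    exact (Complex.le_def.mp h).1
  have hAentry : ∀ i j, A i j = ((A i j).re : ℂ) := fun i j =>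
    Complex.ext rfl (by simp [(hAnonneg i j).1])
  have hAabs : ∀ i j, ‖A i j‖ = (A i j).re := by
    intro i j
    rw [hAentry i j, Complex.norm_real, Real.norm_eq_abs, abs_of_nonneg (hAnonneg i j).2, Complex.ofReal_re]
  have hBprod : ∀ σ : Equiv.Perm (Fin n),
      ∏ i, ‖B (σ i) i‖ ≤ ∏ i, (B i i).re := by
    intro σ
    calc ∏ i, ‖B (σ i) i‖
        ≤ ∏ i, (Real.sqrt (B (σ i) (σ i)).re * Real.sqrt (B i i).re) := by
          apply Finset.prod_le_prod (fun i _ => norm_nonneg _)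
          intro i _
          exact cauchy_schwarz_entry B hB (σ i) i
      _ = (∏ i, Real.sqrt (B (σ i) (σ i)).re) * ∏ i, Real.sqrt (B i i).re :=
          Finset.prod_mul_distrib
      _ = (∏ i, Real.sqrt (B i i).re) * ∏ i, Real.sqrt (B i i).re := by
          rw [Equiv.prod_comp σ (fun i => Real.sqrt (B i i).re)]
      _ = ∏ i, (Real.sqrt (B i i).re * Real.sqrt (B i i).re) := Finset.prod_mul_distrib.symm
      _ = ∏ i, (B i i).re := by
          refine Finset.prod_congr rfl fun i _ => ?_
          exact Real.mul_self_sqrt (hBdiag i)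
  calc (Matrix.hadamard A B).permanent.re
      = ∑ σ : Equiv.Perm (Fin n), (∏ i, A (σ i) i * B (σ i) i).re := by
        rw [Matrix.permanent, Complex.re_sum]
        exact Finset.sum_congr rfl fun σ _ => by rw [Matrix.hadamard]; rfl
    _ ≤ ∑ σ : Equiv.Perm (Fin n), (∏ i, (A (σ i) i).re) * ∏ i, ‖B (σ i) i‖ := by
        refine Finset.sum_le_sum fun σ _ => ?_
        calc (∏ i, A (σ i) i * B (σ i) i).re
            ≤ ‖∏ i, A (σ i) i * B (σ i) i‖ := Complex.re_le_norm _
          _ = ∏ i, ‖A (σ i) i‖ * ‖B (σ i) i‖ := by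
              rw [norm_prod]
              exact Finset.prod_congr rfl fun i _ => norm_mul _ _
          _ = (∏ i, (A (σ i) i).re) * ∏ i, ‖B (σ i) i‖ := by
              rw [Finset.prod_mul_distrib]
              congr 1
              exact Finset.prod_congr rfl fun i _ => hAabs _ _
    _ ≤ ∑ σ : Equiv.Perm (Fin n), (∏ i, (A (σ i) i).re) * ∏ i, (B i i).re := by
        refine Finset.sum_le_sum fun σ _ => ?_
        exact mul_le_mul_of_nonneg_left (hBprod σ)
          (Finset.prod_nonneg fun i _ => (hAnonneg _ _).2)
    _ = (∑ σ : Equiv.Perm (Fin n), ∏ i, (A (σ i) i).re) * ∏ i, (B i i).re := by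
        rw [Finset.sum_mul]
    _ = A.permanent.re * ∏ i, (B i i).re := by
        congr 1
        rw [Matrix.permanent, Complex.re_sum]
        refine Finset.sum_congr rfl fun σ _ => ?_
        rw [show (∏ i, A (σ i) i) = ((∏ i, (A (σ i) i).re : ℝ) : ℂ) by
          rw [Complex.ofReal_prod]; exact Finset.prod_congr rfl fun i _ => (hAentry _ _),
          Complex.ofReal_re]
end

section
/- Let A ∈ H_n, let v ∈ ℂ^n be a vector with ‖v‖₂ = 1, and for ε ≥ 0 define the n×n matrix B(ε) = M(ε)*M(ε), where M(ε) is the 2×n matrix with first row (1/α_1, …, 1/α_n) and second row (ε v_1/α_1, …, ε v_n/α_n), with α_i = √(1 + ε²|v_i|²). Then per(A∘B(ε)) = per(A) + ε²·(v*F_A v − per(A)) + O(ε⁴) as ε → 0⁺; precisely, there exist constants C > 0 and δ > 0 such that for all ε with 0 ≤ ε ≤ δ one has |per(A∘B(ε)) − per(A) − ε²·(v*F_A v − per(A))| ≤ C·ε⁴. -/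
open Matrix Finset
open scoped ComplexOrder

/-- `F_A`, with entries `f i j = A i j * per (A(i,j))`, where `A(i,j)` is obtained from `A` by
deleting the `i`-th row and the `j`-th column. -/
noncomputable def Fmat {n : ℕ} (A : Matrix (Fin (n + 1)) (Fin (n + 1)) ℂ) :
    Matrix (Fin (n + 1)) (Fin (n + 1)) ℂ :=
  Matrix.of fun i j => A i j * (A.submatrix i.succAbove j.succAbove).permanent

/-- The `2 × n` matrix `M(ε)` with rows `(1/α_1, …, 1/α_n)` and
`(ε v_1/α_1, …, ε v_n/α_n)`, where `α_i = √(1 + ε²|v_i|²)`. -/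
noncomputable def Mmat {n : ℕ} (v : Fin n → ℂ) (ε : ℝ) : Matrix (Fin 2) (Fin n) ℂ :=
  Matrix.of
    ![fun i => ((Real.sqrt (1 + ε ^ 2 * ‖v i‖ ^ 2) : ℝ) : ℂ)⁻¹,
      fun i => (ε : ℂ) * v i * ((Real.sqrt (1 + ε ^ 2 * ‖v i‖ ^ 2) : ℝ) : ℂ)⁻¹]

/-- `B(ε) = M(ε)* M(ε)`. -/
noncomputable def Bmat {n : ℕ} (v : Fin n → ℂ) (ε : ℝ) : Matrix (Fin n) (Fin n) ℂ :=
  (Mmat v ε)ᴴ * Mmat v ε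

section Aux

open Equiv

variable {n : ℕ}

/-- The permutation of `Fin (n+1)` sending `i ↦ j` and `i.succAbove k ↦ j.succAbove (τ k)`. -/
def permEmbed (i j : Fin (n + 1)) (τ : Perm (Fin n)) : Perm (Fin (n + 1)) :=
  (finSuccEquiv' i).trans (τ.optionCongr.trans (finSuccEquiv' j).symm)

@[simp] lemma permEmbed_apply_self (i j : Fin (n + 1)) (τ : Perm (Fin n)) :
    permEmbed i j τ i = j := by
  simp [permEmbed, finSuccEquiv'_at]

@[simp] lemma permEmbed_apply_succAbove (i j : Fin (n + 1)) (τ : Perm (Fin n)) (k : Fin n) :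
    permEmbed i j τ (i.succAbove k) = j.succAbove (τ k) := by
  simp [permEmbed, finSuccEquiv'_succAbove, finSuccEquiv'_symm_some]

lemma permEmbed_bijective (i : Fin (n + 1)) :
    Function.Bijective (fun p : Fin (n + 1) × Perm (Fin n) => permEmbed i p.1 p.2) := by
  constructor
  · rintro ⟨j, τ⟩ ⟨j', τ'⟩ h
    simp only at h
    have hj : j = j' := by
      have := congrArg (fun σ : Perm (Fin (n+1)) => σ i) h
      simpa using this
    subst hj
    refine Prod.ext rfl (Equiv.ext fun k => ?_)
    have := congrArg (fun σ : Perm (Fin (n+1)) => σ (i.succAbove k)) h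
    simp only [permEmbed_apply_succAbove] at this
    exact Fin.succAbove_right_injective this
  · intro σ
    set e : Option (Fin n) ≃ Option (Fin n) :=
      ((finSuccEquiv' i).symm.trans (σ.trans (finSuccEquiv' (σ i)))) with he
    have hnone : e none = none := by
      simp [he, finSuccEquiv'_symm_none, finSuccEquiv'_at]
    refine ⟨⟨σ i, Equiv.removeNone e⟩, Equiv.ext fun k => ?_⟩
    rcases eq_or_ne k i with rfl | hk
    · simp
    · obtain ⟨m, rfl⟩ := Fin.exists_succAbove_eq hk
      simp only [permEmbed_apply_succAbove]
      have hsome : ∃ x', e (some m) = some x' := by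
        rcases h : e (some m) with _ | x'
        · exfalso
          have : (some m : Option (Fin n)) = none := e.injective (h.trans hnone.symm)
          simp at this
        · exact ⟨x', rfl⟩
      have h1 : some (Equiv.removeNone e m) = e (some m) := Equiv.removeNone_some e hsome
      have h2 : e (some m) = finSuccEquiv' (σ i) (σ (i.succAbove m)) := by
        simp [he, finSuccEquiv'_symm_some]
      have h4 : (finSuccEquiv' (σ i)).symm (some (Equiv.removeNone e m)) = σ (i.succAbove m) := by
        rw [h1, h2, Equiv.symm_apply_apply]
      rw [finSuccEquiv'_symm_some] at h4
      exact h4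

/-- Row-expansion style identity for the permanent. -/
lemma perm_sum_expand (A : Matrix (Fin (n + 1)) (Fin (n + 1)) ℂ) (x : Fin (n + 1) → ℂ)
    (i : Fin (n + 1)) :
    ∑ σ : Perm (Fin (n + 1)), (∏ k, A (σ k) k) * x (σ i)
      = ∑ j, x j * (A j i * (A.submatrix j.succAbove i.succAbove).permanent) := by
  rw [← Fintype.sum_bijective _ (permEmbed_bijective i)
      (fun p : Fin (n+1) × Perm (Fin n) => (∏ k, A ((permEmbed i p.1 p.2) k) k) * x p.1)
      (fun σ => (∏ k, A (σ k) k) * x (σ i)) (fun p => by simp)]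
  rw [Fintype.sum_prod_type]
  refine Finset.sum_congr rfl fun j _ => ?_
  simp only [Matrix.permanent, Finset.mul_sum, Finset.sum_mul]
  refine Finset.sum_congr rfl fun τ _ => ?_
  rw [Fin.prod_univ_succAbove (fun k => A ((permEmbed i j τ) k) k) i]
  simp only [permEmbed_apply_self, permEmbed_apply_succAbove, Matrix.submatrix_apply]
  ring

lemma Bmat_apply' (v : Fin (n + 1) → ℂ) (ε : ℝ) (p q : Fin (n + 1)) :
    Bmat v ε p q = (((Real.sqrt (1 + ε ^ 2 * ‖v p‖ ^ 2) : ℝ) : ℂ))⁻¹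
      * (((Real.sqrt (1 + ε ^ 2 * ‖v q‖ ^ 2) : ℝ) : ℂ))⁻¹
      * (1 + ((ε ^ 2 : ℝ) : ℂ) * ((starRingEnd ℂ) (v p) * v q)) := by
  simp only [Bmat, Mmat, Matrix.mul_apply, Matrix.conjTranspose_apply, Fin.sum_univ_two]
  simp only [Matrix.of_apply, Matrix.cons_val_zero, Matrix.cons_val_one, Matrix.head_cons,
    star_mul', star_inv₀, Complex.star_def, Complex.conj_ofReal]
  push_cast
  ring

lemma hadamard_perm_identity (A : Matrix (Fin (n + 1)) (Fin (n + 1)) ℂ)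
    (v : Fin (n + 1) → ℂ) (ε : ℝ) :
    (∏ k, ((1 + ε ^ 2 * ‖v k‖ ^ 2 : ℝ) : ℂ)) * (Matrix.hadamard A (Bmat v ε)).permanent
      = ∑ σ : Perm (Fin (n + 1)), (∏ k, A (σ k) k) *
          ∏ k, (1 + ((ε ^ 2 : ℝ) : ℂ) * ((starRingEnd ℂ) (v (σ k)) * v k)) := by
  classical
  set β : Fin (n + 1) → ℂ := fun i => ((Real.sqrt (1 + ε ^ 2 * ‖v i‖ ^ 2) : ℝ) : ℂ) with hβdef
  have harg : ∀ i, (0:ℝ) ≤ 1 + ε ^ 2 * ‖v i‖ ^ 2 := fun i => by positivity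
  have hβsq : ∀ i, β i * β i = ((1 + ε ^ 2 * ‖v i‖ ^ 2 : ℝ) : ℂ) := fun i => by
    rw [hβdef, ← Complex.ofReal_mul, Real.mul_self_sqrt (harg i)]
  have hβne : ∀ i, β i ≠ 0 := fun i => by
    simp only [hβdef, ne_eq, Complex.ofReal_eq_zero]
    have : (0:ℝ) < Real.sqrt (1 + ε ^ 2 * ‖v i‖ ^ 2) := Real.sqrt_pos.mpr (by positivity)
    exact ne_of_gt this
  simp only [Matrix.permanent, Finset.mul_sum]
  refine Finset.sum_congr rfl fun σ _ => ?_
  have hfac : ∀ k, Matrix.hadamard A (Bmat v ε) (σ k) k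
      = A (σ k) k * ((β (σ k))⁻¹ * (β k)⁻¹
          * (1 + ((ε ^ 2 : ℝ) : ℂ) * ((starRingEnd ℂ) (v (σ k)) * v k))) := fun k => by
    rw [Matrix.hadamard_apply, Bmat_apply']
  rw [Finset.prod_congr rfl (fun k _ => hfac k), Finset.prod_mul_distrib,
    Finset.prod_mul_distrib, Finset.prod_mul_distrib]
  have hcomp : (∏ k, (β (σ k))⁻¹) = ∏ k, (β k)⁻¹ := Equiv.prod_comp σ (fun k => (β k)⁻¹)
  rw [hcomp]
  have hone : (∏ k, ((1 + ε ^ 2 * ‖v k‖ ^ 2 : ℝ) : ℂ)) * ((∏ k, (β k)⁻¹) * ∏ k, (β k)⁻¹) = 1 := by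
    rw [← Finset.prod_mul_distrib, ← Finset.prod_mul_distrib]
    apply Finset.prod_eq_one
    intro k _
    rw [← hβsq k]
    field_simp
    exact div_self (hβne k)
  linear_combination ((∏ k, A (σ k) k) *
    ∏ k, (1 + ((ε ^ 2 : ℝ) : ℂ) * ((starRingEnd ℂ) (v (σ k)) * v k))) * hone

lemma eval0_derivative_prod {ι : Type*} [DecidableEq ι] (s : Finset ι) (g : ι → ℂ) :
    Polynomial.eval 0 (Polynomial.derivative
        (∏ k ∈ s, (Polynomial.C (g k) * Polynomial.X + 1))) = ∑ k ∈ s, g k := by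
  induction s using Finset.cons_induction with
  | empty => simp
  | cons a s ha ih =>
    simp only [Finset.prod_cons, Polynomial.derivative_mul, Polynomial.derivative_add,
      Polynomial.derivative_one, Polynomial.derivative_C, Polynomial.derivative_X, zero_mul,
      mul_one, add_zero, zero_add, Polynomial.eval_add, Polynomial.eval_mul, Polynomial.eval_C,
      Polynomial.eval_X, Polynomial.eval_prod, mul_zero, Finset.prod_const_one, Finset.sum_cons,
      ih, Polynomial.eval_one, one_mul]

end Aux

/-- For `A` positive semidefinite Hermitian and `v` a unit vector,
`per(A ∘ B(ε)) = per(A) + ε² (v* F_A v − per(A)) + O(ε⁴)` as `ε → 0⁺`. -/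
theorem stmt3 {n : ℕ} (A : Matrix (Fin (n + 1)) (Fin (n + 1)) ℂ) (hA : A.PosSemidef)
    (v : Fin (n + 1) → ℂ) (hv : ∑ i, ‖v i‖ ^ 2 = 1) :
    ∃ C > (0 : ℝ), ∃ δ > (0 : ℝ), ∀ ε : ℝ, 0 ≤ ε → ε ≤ δ →
      ‖((Matrix.hadamard A (Bmat v ε)).permanent - A.permanent -
          (ε : ℂ) ^ 2 * ((∑ i, ∑ j, (starRingEnd ℂ) (v i) * Fmat A i j * v j) - A.permanent))‖
        ≤ C * ε ^ 4 := by
  classical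
  open Polynomial Equiv in
  set P : ℂ := A.permanent with hP
  set S : ℂ := ∑ i, ∑ j, (starRingEnd ℂ) (v i) * Fmat A i j * v j with hSdef
  set c : ℂ := S - P with hc
  -- the key combinatorial identity `S = ∑ σ, w σ * ∑ k, u σ k`
  have hS : S = ∑ σ : Perm (Fin (n + 1)), (∏ k, A (σ k) k) *
      ∑ k, (starRingEnd ℂ) (v (σ k)) * v k := by
    have h1 : ∀ i, ∑ σ : Perm (Fin (n + 1)), (∏ k, A (σ k) k) * (starRingEnd ℂ) (v (σ i))
        = ∑ j, (starRingEnd ℂ) (v j) * (A j i * (A.submatrix j.succAbove i.succAbove).permanent) :=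
      fun i => perm_sum_expand A (fun j => (starRingEnd ℂ) (v j)) i
    have step1 : S = ∑ i, (∑ σ : Perm (Fin (n + 1)),
        (∏ k, A (σ k) k) * (starRingEnd ℂ) (v (σ i))) * v i := by
      rw [hSdef]
      rw [Finset.sum_comm]
      refine Finset.sum_congr rfl fun i _ => ?_
      rw [h1 i, Finset.sum_mul]
      exact Finset.sum_congr rfl fun j _ => rfl
    rw [step1]
    simp only [Finset.sum_mul]
    rw [Finset.sum_comm]
    refine Finset.sum_congr rfl fun σ _ => ?_
    rw [Finset.mul_sum]
    refine Finset.sum_congr rfl fun i _ => ?_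
    ring
  -- the polynomial controlling the error
  set p : Polynomial ℂ :=
    (∑ σ : Perm (Fin (n + 1)), C (∏ k, A (σ k) k) *
        ∏ k, (C ((starRingEnd ℂ) (v (σ k)) * v k) * X + 1))
      - (C P + C c * X) * ∏ k, (C ((‖v k‖ ^ 2 : ℝ) : ℂ) * X + 1) with hpdef
  have hvC : (∑ k, ((‖v k‖ ^ 2 : ℝ) : ℂ)) = 1 := by
    rw [← Complex.ofReal_sum, hv, Complex.ofReal_one]
  have hcoeff0 : p.coeff 0 = 0 := by
    rw [Polynomial.coeff_zero_eq_eval_zero, hpdef]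
    simp only [Polynomial.eval_sub, Polynomial.eval_finset_sum, Polynomial.eval_mul,
      Polynomial.eval_add, Polynomial.eval_prod, Polynomial.eval_C, Polynomial.eval_X,
      Polynomial.eval_one, mul_zero, zero_add, mul_one, Finset.prod_const_one]
    rw [hP, Matrix.permanent]
    ring
  have hcoeff1 : p.coeff 1 = 0 := by
    have hd : p.coeff 1 = (Polynomial.derivative p).eval 0 := by
      rw [← Polynomial.coeff_zero_eq_eval_zero, Polynomial.coeff_derivative]
      push_cast
      ring
    rw [hd, hpdef]
    simp only [Polynomial.derivative_sub, Polynomial.derivative_sum, Polynomial.derivative_mul,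
      Polynomial.derivative_C, Polynomial.derivative_prod, Polynomial.derivative_add,
      Polynomial.derivative_one, Polynomial.derivative_X, zero_mul, zero_add, mul_one, add_zero,
      Polynomial.eval_sub, Polynomial.eval_add, Polynomial.eval_mul, Polynomial.eval_finset_sum,
      Polynomial.eval_prod, Polynomial.eval_C, Polynomial.eval_X, mul_zero, Finset.prod_const_one,
      one_mul]
    simp only [eval0_derivative_prod, Polynomial.eval_one, Finset.prod_const_one, one_mul,
      mul_one]
    rw [← hS, hvC]
    rw [hc]
    ring
  have hdvd : (Polynomial.X : Polynomial ℂ) ^ 2 ∣ p := by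
    rw [Polynomial.X_pow_dvd_iff]
    intro d hd
    interval_cases d
    · exact hcoeff0
    · exact hcoeff1
  obtain ⟨q, hq⟩ := hdvd
  refine ⟨(∑ k ∈ Finset.range (q.natDegree + 1), ‖q.coeff k‖) + 1, by positivity, 1,
    one_pos, fun ε hε0 hε1 => ?_⟩
  set x : ℂ := ((ε ^ 2 : ℝ) : ℂ) with hx
  have hevalp : p.eval x = (∑ σ : Equiv.Perm (Fin (n+1)), (∏ k, A (σ k) k) *
        ∏ k, (1 + ((ε ^ 2 : ℝ) : ℂ) * ((starRingEnd ℂ) (v (σ k)) * v k)))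
      - (P + c * x) * ∏ k, ((1 + ε ^ 2 * ‖v k‖ ^ 2 : ℝ) : ℂ) := by
    rw [hpdef]
    simp only [Polynomial.eval_sub, Polynomial.eval_finset_sum, Polynomial.eval_mul,
      Polynomial.eval_add, Polynomial.eval_prod, Polynomial.eval_C, Polynomial.eval_X,
      Polynomial.eval_one]
    congr 1
    · refine Finset.sum_congr rfl fun σ _ => ?_
      congr 1
      refine Finset.prod_congr rfl fun k _ => ?_
      rw [hx]; ring
    · congr 1
      refine Finset.prod_congr rfl fun k _ => ?_
      rw [hx]; push_cast; ring
  have hkey := hadamard_perm_identity A v ε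
  have hD1 : (1:ℝ) ≤ ∏ k, (1 + ε ^ 2 * ‖v k‖ ^ 2) := by
    calc (1:ℝ) = ∏ _k : Fin (n+1), 1 := by simp
      _ ≤ ∏ k, (1 + ε ^ 2 * ‖v k‖ ^ 2) := by
          refine Finset.prod_le_prod (fun k _ => by norm_num) (fun k _ => ?_)
          have h0 : (0:ℝ) ≤ ε ^ 2 * ‖v k‖ ^ 2 := by positivity
          linarith
  have hDc : (∏ k, ((1 + ε ^ 2 * ‖v k‖ ^ 2 : ℝ) : ℂ))
      = (((∏ k, (1 + ε ^ 2 * ‖v k‖ ^ 2) : ℝ)) : ℂ) := by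
    push_cast
    rfl
  set Per := (Matrix.hadamard A (Bmat v ε)).permanent with hPer
  have hx2 : (ε:ℂ)^2 = x := by rw [hx]; push_cast; ring
  have hmain : (((∏ k, (1 + ε ^ 2 * ‖v k‖ ^ 2) : ℝ)) : ℂ) * (Per - P - (ε:ℂ)^2 * c)
      = p.eval x := by
    rw [hx2, hevalp, ← hDc]
    linear_combination hkey
  have habs : ‖Per - P - (ε:ℂ)^2 * c‖ ≤ ‖p.eval x‖ := by
    have h := congrArg (fun z : ℂ => ‖z‖) hmain
    rw [norm_mul, Complex.norm_real, Real.norm_eq_abs,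
      abs_of_nonneg (le_trans zero_le_one hD1)] at h
    nlinarith [norm_nonneg (Per - P - (ε:ℂ)^2 * c), norm_nonneg (p.eval x)]
  have hax : ‖x‖ ≤ 1 := by
    rw [hx, Complex.norm_real, Real.norm_eq_abs, abs_of_nonneg (sq_nonneg ε)]
    nlinarith
  have hqb : ‖q.eval x‖
      ≤ ∑ k ∈ Finset.range (q.natDegree + 1), ‖q.coeff k‖ := by
    rw [Polynomial.eval_eq_sum_range]
    refine le_trans (norm_sum_le _ _) (Finset.sum_le_sum fun k _ => ?_)
    rw [norm_mul, norm_pow]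
    calc ‖q.coeff k‖ * ‖x‖ ^ k
        ≤ ‖q.coeff k‖ * 1 :=
          mul_le_mul_of_nonneg_left (pow_le_one₀ (norm_nonneg x) hax)
            (norm_nonneg _)
      _ = _ := mul_one _
  have hpx : ‖p.eval x‖ = ε^4 * ‖q.eval x‖ := by
    rw [hq, Polynomial.eval_mul, Polynomial.eval_pow, Polynomial.eval_X, norm_mul, norm_pow]
    rw [hx, Complex.norm_real, Real.norm_eq_abs, abs_of_nonneg (sq_nonneg ε)]
    ring
  calc ‖Per - P - (ε:ℂ)^2 * c‖ ≤ ‖p.eval x‖ := habs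
    _ = ε^4 * ‖q.eval x‖ := hpx
    _ ≤ ε^4 * ∑ k ∈ Finset.range (q.natDegree + 1), ‖q.coeff k‖ :=
        mul_le_mul_of_nonneg_left hqb (by positivity)
    _ ≤ ((∑ k ∈ Finset.range (q.natDegree + 1), ‖q.coeff k‖) + 1) * ε^4 := by
        nlinarith [pow_nonneg hε0 4]
end

section
/- Let A ∈ H_n (with n ≥ 1) be such that per(A∘B) ≤ per(A)·∏_{i=1}^n b_{i,i} holds for every B = [b_{i,j}] ∈ H_n. Then for every vector v ∈ ℂ^n one has v*F_A v ≤ per(A)·‖v‖₂²; equivalently, the largest eigenvalue of the Hermitian matrix F_A is at most per(A). -/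
open Matrix Finset
open scoped ComplexOrder
open Equiv Filter

section helper

theorem my_permanent_succ_column_zero {n : ℕ} (A : Matrix (Fin n.succ) (Fin n.succ) ℂ) :
    A.permanent = ∑ i : Fin n.succ, A i 0 * (A.submatrix i.succAbove Fin.succ).permanent := by
  rw [Matrix.permanent, Finset.univ_perm_fin_succ, ← Finset.univ_product_univ]
  simp only [Finset.sum_map, Equiv.toEmbedding_apply, Finset.sum_product]
  refine Finset.sum_congr rfl fun i _ => Fin.cases ?_ (fun i => ?_) i
  · simp only [Matrix.permanent, Fin.prod_univ_succ, Finset.mul_sum,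
      Equiv.Perm.decomposeFin_symm_apply_zero, Equiv.Perm.decomposeFin_symm_apply_succ,
      Matrix.submatrix_apply, Fin.succAbove_zero, Equiv.swap_self, Equiv.refl_apply]
  · rw [Matrix.permanent, Finset.mul_sum,
      ← (Group.mulLeft_bijective i.cycleRange).sum_comp
        (fun σ => A i.succ 0 * ∏ k, (A.submatrix i.succ.succAbove Fin.succ) (σ k) k)]
    refine Finset.sum_congr rfl fun σ _ => ?_
    simp only [Fin.prod_univ_succ, Equiv.Perm.decomposeFin_symm_apply_zero,
      Equiv.Perm.decomposeFin_symm_apply_succ, Matrix.submatrix_apply, Perm.coe_mul,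
      Function.comp_apply, Fin.succAbove_cycleRange]

theorem my_permanent_succ_row_zero {n : ℕ} (A : Matrix (Fin n.succ) (Fin n.succ) ℂ) :
    A.permanent = ∑ j : Fin n.succ, A 0 j * (A.submatrix Fin.succ j.succAbove).permanent := by
  rw [← Matrix.permanent_transpose A, my_permanent_succ_column_zero]
  refine Finset.sum_congr rfl fun i _ => ?_
  rw [← Matrix.permanent_transpose]
  simp only [Matrix.transpose_apply, Matrix.transpose_submatrix, Matrix.transpose_transpose]

theorem my_permanent_succ_row {n : ℕ} (A : Matrix (Fin n.succ) (Fin n.succ) ℂ) (i : Fin n.succ) :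
    A.permanent = ∑ j : Fin n.succ, A i j * (A.submatrix i.succAbove j.succAbove).permanent := by
  rw [← Matrix.permanent_permute_cols i.cycleRange⁻¹ A, my_permanent_succ_row_zero]
  refine Finset.sum_congr rfl fun j _ => ?_
  rw [Matrix.submatrix_apply, Matrix.submatrix_submatrix, Function.comp_def, id]
  congr 1
  · congr 1
    rw [Equiv.Perm.inv_def, Fin.cycleRange_symm_zero]
  · congr 1
    ext i' j'
    simp [Equiv.Perm.inv_def, Fin.cycleRange_symm_succ]

theorem my_permanent_succ_column {n : ℕ} (A : Matrix (Fin n.succ) (Fin n.succ) ℂ) (j : Fin n.succ) :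
    A.permanent = ∑ i : Fin n.succ, A i j * (A.submatrix i.succAbove j.succAbove).permanent := by
  rw [← Matrix.permanent_transpose, my_permanent_succ_row _ j]
  refine Finset.sum_congr rfl fun i _ => ?_
  rw [← Matrix.permanent_transpose, Matrix.transpose_apply, Matrix.transpose_submatrix,
    Matrix.transpose_transpose]

theorem my_key {n : ℕ} (M : Matrix (Fin (n + 1)) (Fin (n + 1)) ℂ) (j : Fin (n + 1))
    (g : Fin (n + 1) → ℂ) :
    ∑ σ : Equiv.Perm (Fin (n + 1)), g (σ j) * ∏ k, M (σ k) k
      = ∑ i, g i * M i j * (M.submatrix i.succAbove j.succAbove).permanent := by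
  set N := M.updateCol j (fun i => g i * M i j) with hNdef
  have h1 : N.permanent = ∑ σ : Equiv.Perm (Fin (n + 1)), g (σ j) * ∏ k, M (σ k) k := by
    rw [Matrix.permanent]
    refine Finset.sum_congr rfl fun σ _ => ?_
    rw [← Finset.mul_prod_erase univ (fun k => N (σ k) k) (mem_univ j),
      ← Finset.mul_prod_erase univ (fun k => M (σ k) k) (mem_univ j)]
    have e1 : N (σ j) j = g (σ j) * M (σ j) j := by simp [hNdef]
    have e2 : ∀ k ∈ univ.erase j, N (σ k) k = M (σ k) k := by
      intro k hk
      simp [hNdef, Matrix.updateCol_ne (Finset.ne_of_mem_erase hk)]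
    rw [e1, Finset.prod_congr rfl e2, mul_assoc]
  have h2 : N.permanent = ∑ i, g i * M i j * (M.submatrix i.succAbove j.succAbove).permanent := by
    rw [my_permanent_succ_column N j]
    refine Finset.sum_congr rfl fun i _ => ?_
    congr 1
    · simp [hNdef]
    · congr 1
      exact Matrix.submatrix_updateCol_succAbove M _ _ _
  rw [← h1, h2]

theorem slope_le {f g : ℝ → ℝ} {f' g' : ℝ} (hf : HasDerivAt f f' 0) (hg : HasDerivAt g g' 0)
    (h0 : f 0 = g 0) (h : ∀ t : ℝ, 0 ≤ t → f t ≤ g t) : f' ≤ g' := by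
  have hφ : HasDerivAt (f - g) (f' - g') 0 := hf.sub hg
  rw [hasDerivAt_iff_tendsto_slope] at hφ
  have h2 : Tendsto (slope (f - g) 0) (nhdsWithin 0 (Set.Ioi 0)) (nhds (f' - g')) :=
    hφ.mono_left (nhdsWithin_mono _ (fun x hx => ne_of_gt hx))
  have h3 : ∀ᶠ t in nhdsWithin (0:ℝ) (Set.Ioi 0), slope (f - g) 0 t ≤ 0 := by
    refine eventually_nhdsWithin_of_forall (fun t ht => ?_)
    rw [slope_def_field]
    rw [div_nonpos_iff]
    right
    constructor
    · simp only [Pi.sub_apply, h0]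
      have := h t (le_of_lt ht)
      linarith
    · simp [le_of_lt (Set.mem_Ioi.mp ht)]
  have := le_of_tendsto h2 h3
  linarith
end helper

/-- If `A` is positive semidefinite Hermitian and
`per(A ∘ B) ≤ per(A) · ∏ i, B i i` for every positive semidefinite Hermitian `B`, then
`v* F_A v ≤ per(A) · ‖v‖₂²` for every vector `v`, i.e. `λ_max(F_A) ≤ per(A)`. -/
theorem stmt4 {n : ℕ} (A : Matrix (Fin (n + 1)) (Fin (n + 1)) ℂ) (hA : A.PosSemidef)
    (h : ∀ B : Matrix (Fin (n + 1)) (Fin (n + 1)) ℂ, B.PosSemidef →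
      (Matrix.hadamard A B).permanent.re ≤ A.permanent.re * ∏ i, (B i i).re) :
    ∀ v : Fin (n + 1) → ℂ,
      (∑ i, ∑ j, (starRingEnd ℂ) (v i) * Fmat A i j * v j).re ≤
        A.permanent.re * ∑ i, ‖v i‖ ^ 2 := by
  intro v
  set C : Matrix (Fin (n + 1)) (Fin (n + 1)) ℂ :=
    Matrix.of fun i j => (starRingEnd ℂ) (v i) * v j with hC
  set B : ℝ → Matrix (Fin (n + 1)) (Fin (n + 1)) ℂ :=
    fun t => Matrix.of fun i j => 1 + (t : ℂ) * C i j with hB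
  -- positive semidefiniteness of B t for t ≥ 0
  have hBpsd : ∀ t : ℝ, 0 ≤ t → (B t).PosSemidef := by
    intro t ht
    refine Matrix.posSemidef_iff_dotProduct_mulVec.mpr ⟨?_, ?_⟩
    · ext i j
      simp only [hB, hC, Matrix.conjTranspose_apply, Matrix.of_apply, star_add, star_mul',
        star_one, Complex.star_def, _root_.map_mul, Complex.conj_conj, Complex.conj_ofReal]
      ring
    · intro x
      have key : star x ⬝ᵥ ((B t) *ᵥ x) =
          star (∑ i, x i) * (∑ i, x i)
            + (t : ℂ) * (star (∑ i, v i * x i) * (∑ i, v i * x i)) := by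
        simp only [dotProduct, mulVec, hB, hC, Matrix.of_apply, Pi.star_apply, star_sum]
        have inner : ∀ i, ∑ j, star (x i) * ((1 + (t : ℂ) * ((starRingEnd ℂ) (v i) * v j)) * x j)
            = star (x i) * (∑ j, x j) + (t : ℂ) * (star (v i * x i) * (∑ j, v j * x j)) := by
          intro i
          rw [Finset.mul_sum, Finset.mul_sum, ← Finset.mul_sum, Finset.mul_sum, Finset.mul_sum,
            ← Finset.sum_add_distrib]
          refine Finset.sum_congr rfl fun j _ => ?_
          simp only [Complex.star_def, _root_.map_mul]
          ring
        calc ∑ i, star (x i) * ∑ j, (1 + (t : ℂ) * ((starRingEnd ℂ) (v i) * v j)) * x j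
            = ∑ i, (star (x i) * (∑ j, x j)
                + (t : ℂ) * (star (v i * x i) * (∑ j, v j * x j))) := by
              refine Finset.sum_congr rfl fun i _ => ?_
              rw [← inner i, Finset.mul_sum]
          _ = (∑ i, star (x i)) * (∑ i, x i)
                + (t : ℂ) * ((∑ i, star (v i * x i)) * (∑ i, v i * x i)) := by
              rw [Finset.sum_add_distrib, ← Finset.sum_mul, ← Finset.mul_sum, ← Finset.sum_mul]
      rw [key]
      refine add_nonneg (star_mul_self_nonneg _) (mul_nonneg ?_ (star_mul_self_nonneg _))
      exact Complex.zero_le_real.mpr ht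
  -- the function F t = per (A ∘ B t)
  set F : ℝ → ℂ :=
    fun t => ∑ σ : Equiv.Perm (Fin (n + 1)), ∏ k, (A (σ k) k * (1 + (t : ℂ) * C (σ k) k))
    with hF
  have hFB : ∀ t : ℝ, (Matrix.hadamard A (B t)).permanent = F t := by
    intro t
    rw [Matrix.permanent]
    exact Finset.sum_congr rfl fun σ _ => Finset.prod_congr rfl fun k _ => by
      simp [Matrix.hadamard, hB]
  -- derivative of F at 0
  have hf' : ∀ (σ : Equiv.Perm (Fin (n + 1))) (k : Fin (n + 1)),
      HasDerivAt (fun t : ℝ => A (σ k) k * (1 + (t : ℂ) * C (σ k) k))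
        (A (σ k) k * C (σ k) k) 0 := by
    intro σ k
    have h1 : HasDerivAt (fun t : ℝ => (t : ℂ)) 1 0 := by
      simpa using (hasDerivAt_id (0 : ℝ)).ofReal_comp
    have h2 := ((h1.mul_const (C (σ k) k)).const_add 1).const_mul (A (σ k) k)
    simpa using h2
  have hFd : HasDerivAt F
      (∑ σ : Equiv.Perm (Fin (n + 1)), ∑ k,
        (∏ l ∈ univ.erase k, (A (σ l) l * (1 + ((0 : ℝ) : ℂ) * C (σ l) l)))
          • (A (σ k) k * C (σ k) k)) 0 :=
    HasDerivAt.fun_sum (fun σ _ => HasDerivAt.fun_finsetProd (fun k _ => hf' σ k))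
  -- identify the derivative
  have hD : (∑ σ : Equiv.Perm (Fin (n + 1)), ∑ k,
        (∏ l ∈ univ.erase k, (A (σ l) l * (1 + ((0 : ℝ) : ℂ) * C (σ l) l)))
          • (A (σ k) k * C (σ k) k))
      = ∑ i, ∑ j, (starRingEnd ℂ) (v i) * Fmat A i j * v j := by
    have step1 : (∑ σ : Equiv.Perm (Fin (n + 1)), ∑ k,
        (∏ l ∈ univ.erase k, (A (σ l) l * (1 + ((0 : ℝ) : ℂ) * C (σ l) l)))
          • (A (σ k) k * C (σ k) k))
        = ∑ σ : Equiv.Perm (Fin (n + 1)), ∑ k, C (σ k) k * ∏ l, A (σ l) l := by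
      refine Finset.sum_congr rfl fun σ _ => Finset.sum_congr rfl fun k _ => ?_
      rw [smul_eq_mul]
      have e1 : ∏ l ∈ univ.erase k, (A (σ l) l * (1 + ((0 : ℝ) : ℂ) * C (σ l) l))
          = ∏ l ∈ univ.erase k, A (σ l) l :=
        Finset.prod_congr rfl fun l _ => by simp
      rw [e1, ← Finset.mul_prod_erase univ (fun l => A (σ l) l) (mem_univ k)]
      ring
    rw [step1, Finset.sum_comm]
    have step2 : ∀ k : Fin (n + 1),
        (∑ σ : Equiv.Perm (Fin (n + 1)), C (σ k) k * ∏ l, A (σ l) l)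
        = ∑ i, C i k * A i k * (A.submatrix i.succAbove k.succAbove).permanent :=
      fun k => my_key A k (fun i => C i k)
    rw [Finset.sum_congr rfl fun k _ => step2 k, Finset.sum_comm]
    refine Finset.sum_congr rfl fun i _ => Finset.sum_congr rfl fun k _ => ?_
    simp only [Fmat, hC, Matrix.of_apply]
    ring
  rw [hD] at hFd
  -- real parts
  have hfd : HasDerivAt (fun t => (F t).re)
      ((∑ i, ∑ j, (starRingEnd ℂ) (v i) * Fmat A i j * v j).re) 0 :=
    Complex.reCLM.hasFDerivAt.comp_hasDerivAt 0 hFd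
  -- the right-hand side function G
  have hg1 : ∀ i : Fin (n + 1), HasDerivAt (fun t : ℝ => 1 + t * ‖v i‖ ^ 2) (‖v i‖ ^ 2) 0 := by
    intro i
    simpa using ((hasDerivAt_id (0 : ℝ)).mul_const (‖v i‖ ^ 2)).const_add 1
  have hGd0 : HasDerivAt (fun t : ℝ => ∏ i, (1 + t * ‖v i‖ ^ 2))
      (∑ i, (∏ l ∈ univ.erase i, (1 + (0 : ℝ) * ‖v l‖ ^ 2)) • ‖v i‖ ^ 2) 0 :=
    HasDerivAt.fun_finsetProd (fun i _ => hg1 i)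
  have hsimp : (∑ i, (∏ l ∈ univ.erase i, (1 + (0 : ℝ) * ‖v l‖ ^ 2)) • ‖v i‖ ^ 2)
      = ∑ i, ‖v i‖ ^ 2 := by
    refine Finset.sum_congr rfl fun i _ => ?_
    simp
  rw [hsimp] at hGd0
  have hGd : HasDerivAt (fun t : ℝ => A.permanent.re * ∏ i, (1 + t * ‖v i‖ ^ 2))
      (A.permanent.re * ∑ i, ‖v i‖ ^ 2) 0 := hGd0.const_mul _
  -- diagonal entries
  have hdiag : ∀ (t : ℝ) (i : Fin (n + 1)), ((B t) i i).re = 1 + t * ‖v i‖ ^ 2 := by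
    intro t i
    have e : (starRingEnd ℂ) (v i) * v i = ((‖v i‖ ^ 2 : ℝ) : ℂ) := by
      rw [mul_comm, Complex.mul_conj]
      norm_cast
      rw [Complex.normSq_eq_norm_sq]
    simp only [hB, hC, Matrix.of_apply, e, ← Complex.ofReal_mul]
    simp [← Complex.ofReal_pow]
  -- the inequality for t ≥ 0
  have hineq : ∀ t : ℝ, 0 ≤ t → (F t).re ≤ A.permanent.re * ∏ i, (1 + t * ‖v i‖ ^ 2) := by
    intro t ht
    have := h (B t) (hBpsd t ht)
    rw [hFB t] at this
    calc (F t).re ≤ A.permanent.re * ∏ i, ((B t) i i).re := this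
      _ = A.permanent.re * ∏ i, (1 + t * ‖v i‖ ^ 2) := by
          rw [Finset.prod_congr rfl fun i _ => hdiag t i]
  -- equality at 0
  have h0 : (F 0).re = A.permanent.re * ∏ i, (1 + (0:ℝ) * ‖v i‖ ^ 2) := by
    have e : F 0 = A.permanent := by
      rw [← hFB 0]
      congr 1
      ext i j
      simp [Matrix.hadamard, hB]
    rw [e]
    simp
  exact slope_le hfd hGd h0 hineq
end

section
/- Let A ∈ H_n (with n ≥ 1) be such that per(A∘B) ≤ per(A)·∏_{i=1}^n b_{i,i} holds for every B = [b_{i,j}] ∈ H_n all of whose entries are nonnegative real numbers. Then for every real vector v ∈ ℝ^n one has ∑_{i,j} v_i·Re(f_{i,j})·v_j ≤ per(A)·‖v‖₂²; equivalently, the largest eigenvalue of the real symmetric matrix Re(F_A) (the entrywise real part of F_A) is at most per(A). -/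
open Matrix Finset
open scoped ComplexOrder

lemma perm_fiber {n : ℕ} (A : Matrix (Fin (n+1)) (Fin (n+1)) ℂ) (i k : Fin (n+1)) :
    ∑ σ ∈ Finset.univ.filter (fun σ : Equiv.Perm (Fin (n+1)) => σ k = i), ∏ m, A (σ m) m
      = A i k * (A.submatrix i.succAbove k.succAbove).permanent := by
  rw [Matrix.permanent, Finset.mul_sum]
  symm
  refine Finset.sum_bij
    (fun (τ : Equiv.Perm (Fin n)) _ =>
      ((finSuccEquiv' k).trans ((Equiv.optionCongr τ).trans (finSuccEquiv' i).symm) :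
        Equiv.Perm (Fin (n+1))))
    ?_ ?_ ?_ ?_
  · intro τ _
    simp [finSuccEquiv'_at, finSuccEquiv'_symm_none]
  · intro τ₁ _ τ₂ _ hEq
    ext m
    have := congrArg (fun (σ : Equiv.Perm (Fin (n+1))) => σ (k.succAbove m)) hEq
    simp only [Equiv.trans_apply, finSuccEquiv'_succAbove, Equiv.optionCongr_apply,
      Option.map_some, finSuccEquiv'_symm_some] at this
    exact congrArg Fin.val ((Fin.succAbove_right_injective (p := i)) this)
  · intro σ hσ
    have hk : σ k = i := (Finset.mem_filter.mp hσ).2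
    set e : Option (Fin n) ≃ Option (Fin n) :=
      ((finSuccEquiv' k).symm.trans (σ : Equiv.Perm (Fin (n+1)))).trans (finSuccEquiv' i) with he
    have hnone : e none = none := by
      simp [he, finSuccEquiv'_symm_none, hk, finSuccEquiv'_at]
    refine ⟨Equiv.removeNone e, Finset.mem_univ _, ?_⟩
    ext x
    rcases eq_or_ne x k with rfl | hx
    · simp [finSuccEquiv'_at, finSuccEquiv'_symm_none, hk]
    · obtain ⟨m, rfl⟩ := Fin.exists_succAbove_eq (Ne.symm hx).symm
      -- need x = k.succAbove m with x ≠ k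
      have hne : σ (k.succAbove m) ≠ i := by
        rw [← hk]; exact fun hcon => Fin.succAbove_ne k m (σ.injective hcon)
      obtain ⟨m', hm'⟩ := Fin.exists_succAbove_eq hne
      have hesome : e (some m) = some m' := by
        simp [he, finSuccEquiv'_symm_some, ← hm', finSuccEquiv'_succAbove]
      have : Equiv.removeNone e m = m' := by
        have := Equiv.removeNone_some e ⟨m', hesome⟩
        rw [hesome] at this
        exact Option.some_injective _ this
      show ((finSuccEquiv' i).symm ((Equiv.optionCongr (Equiv.removeNone e))
          (finSuccEquiv' k (k.succAbove m))) : Fin (n+1)).val = _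
      rw [finSuccEquiv'_succAbove, Equiv.optionCongr_apply, Option.map_some, this,
        finSuccEquiv'_symm_some, hm']
  · intro τ _
    rw [Fin.prod_univ_succAbove
      (fun m => A ((((finSuccEquiv' k).trans
        ((Equiv.optionCongr τ).trans (finSuccEquiv' i).symm))) m) m) k]
    congr 1
    · simp [finSuccEquiv'_at, finSuccEquiv'_symm_none]
    · refine Finset.prod_congr rfl fun m _ => ?_
      simp [finSuccEquiv'_succAbove, finSuccEquiv'_symm_some, Matrix.submatrix_apply]

lemma keyid {n : ℕ} (A : Matrix (Fin (n+1)) (Fin (n+1)) ℂ) (v : Fin (n+1) → ℝ) :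
    ∑ σ : Equiv.Perm (Fin (n+1)), (∏ m, A (σ m) m) * (∑ k, ((v (σ k) : ℂ) * v k))
      = ∑ k, ∑ i, (v i : ℂ) * v k * Fmat A i k := by
  simp_rw [Finset.mul_sum]
  rw [Finset.sum_comm]
  refine Finset.sum_congr rfl fun k _ => ?_
  rw [← Finset.sum_fiberwise_of_maps_to (g := fun σ : Equiv.Perm (Fin (n+1)) => σ k)
    (fun σ _ => Finset.mem_univ (σ k)) (fun σ => (∏ m, A (σ m) m) * ((v (σ k) : ℂ) * v k))]
  refine Finset.sum_congr rfl fun i _ => ?_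
  have : ∀ σ ∈ Finset.univ.filter (fun σ : Equiv.Perm (Fin (n+1)) => σ k = i),
      (∏ m, A (σ m) m) * ((v (σ k) : ℂ) * v k)
        = ((v i : ℂ) * v k) * ∏ m, A (σ m) m := by
    intro σ hσ
    rw [(Finset.mem_filter.mp hσ).2, mul_comm]
  rw [Finset.sum_congr rfl this, ← Finset.mul_sum, perm_fiber]
  simp only [Fmat, Matrix.of_apply]

lemma prod_deriv {n : ℕ} (d : Fin (n+1) → ℝ) :
    HasDerivAt (fun t : ℝ => ∏ m, (1 + t * d m)) (∑ m, d m) 0 := by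
  have h := HasDerivAt.fun_finsetProd (u := Finset.univ)
    (f := fun (m : Fin (n+1)) (t : ℝ) => 1 + t * d m) (f' := fun m => d m) (x := 0)
    (fun m _ => by simpa using ((hasDerivAt_id (0:ℝ)).mul_const (d m)).const_add 1)
  simpa using h

/-- If `A` is positive semidefinite Hermitian and
`per(A ∘ B) ≤ per(A) · ∏ i, B i i` for every positive semidefinite Hermitian `B` all of whose
entries are nonnegative reals, then for every real vector `v`,
`∑ i j, v i · Re(f i j) · v j ≤ per(A) · ‖v‖₂²`, i.e. `λ_max(Re F_A) ≤ per(A)`. -/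
theorem stmt5 {n : ℕ} (A : Matrix (Fin (n + 1)) (Fin (n + 1)) ℂ) (hA : A.PosSemidef)
    (h : ∀ B : Matrix (Fin (n + 1)) (Fin (n + 1)) ℂ, B.PosSemidef →
      (∀ i j, (B i j).im = 0 ∧ 0 ≤ (B i j).re) →
      (Matrix.hadamard A B).permanent.re ≤ A.permanent.re * ∏ i, (B i i).re) :
    ∀ v : Fin (n + 1) → ℝ,
      (∑ i, ∑ j, v i * (Fmat A i j).re * v j) ≤ A.permanent.re * ∑ i, (v i) ^ 2 := by
  intro v
  set S : ℝ := ∑ i, v i ^ 2 with hS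
  have hS0 : (0:ℝ) ≤ S := Finset.sum_nonneg fun i _ => sq_nonneg _
  have hvS : ∀ i, v i ^ 2 ≤ S :=
    fun i => Finset.single_le_sum (f := fun i => v i ^ 2) (fun j _ => sq_nonneg _)
      (Finset.mem_univ i)
  set δ : ℝ := (S + 1)⁻¹ with hδ
  have hδ0 : 0 < δ := by positivity
  set P : ℝ := A.permanent.re with hP
  set g : ℝ → ℝ := fun t => P * ∏ m, (1 + t * v m ^ 2)
    - ∑ σ : Equiv.Perm (Fin (n+1)), (∏ m, A (σ m) m).re * ∏ m, (1 + t * (v (σ m) * v m))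
    with hg
  -- step (a): nonnegativity of g on (0, δ]
  have key : ∀ t ∈ Set.Ioc (0:ℝ) δ, 0 ≤ g t := by
    intro t ht
    have ht1 : t * (S + 1) ≤ 1 := by
      have h2 := mul_le_mul_of_nonneg_right ht.2 (by positivity : (0:ℝ) ≤ S + 1)
      rwa [hδ, inv_mul_cancel₀ (by positivity : (S:ℝ) + 1 ≠ 0)] at h2
    have hent : ∀ i j, 0 ≤ 1 + t * (v i * v j) := by
      intro i j
      nlinarith [sq_nonneg (v i + v j), sq_nonneg (v i - v j), hvS i, hvS j, ht.1]
    set B : Matrix (Fin (n+1)) (Fin (n+1)) ℂ :=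
      Matrix.of fun i j => ((1 + t * (v i * v j) : ℝ) : ℂ) with hB
    have hBpsd : B.PosSemidef := by
      rw [Matrix.posSemidef_iff_dotProduct_mulVec]
      constructor
      · ext i j
        simp only [hB, Matrix.conjTranspose_apply, Matrix.of_apply]
        rw [mul_comm (v j) (v i), Complex.star_def, Complex.conj_ofReal]
      · intro x
        have e1 : star (∑ j, x j) * (∑ j, x j)
            = ∑ i, ∑ j, star (x i) * x j := by
          rw [star_sum, Finset.sum_mul_sum]
        have e2 : star (∑ j, (v j : ℂ) * x j) * (∑ j, (v j : ℂ) * x j)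
            = ∑ i, ∑ j, (star (x i) * (v i : ℂ)) * ((v j : ℂ) * x j) := by
          rw [star_sum, Finset.sum_mul_sum]
          refine Finset.sum_congr rfl fun i _ => Finset.sum_congr rfl fun j _ => ?_
          rw [star_mul', Complex.star_def, Complex.conj_ofReal]
          ring
        have expand : dotProduct (star x) (B *ᵥ x)
            = star (∑ j, x j) * (∑ j, x j)
              + (t:ℂ) * (star (∑ j, (v j : ℂ) * x j) * (∑ j, (v j : ℂ) * x j)) := by
          rw [e1, e2]
          simp only [dotProduct, Matrix.mulVec, Pi.star_apply, hB, Matrix.of_apply,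
            Finset.mul_sum, ← Finset.sum_add_distrib]
          refine Finset.sum_congr rfl fun i _ => Finset.sum_congr rfl fun j _ => ?_
          push_cast
          ring
        rw [expand]
        have h1 : (0:ℂ) ≤ star (∑ j, x j) * (∑ j, x j) := star_mul_self_nonneg _
        have h2 : (0:ℂ) ≤ (t:ℂ) := by
          rw [Complex.zero_le_real]; exact ht.1.le
        have h3 : (0:ℂ) ≤ star (∑ j, (v j : ℂ) * x j) * (∑ j, (v j : ℂ) * x j) :=
          star_mul_self_nonneg _
        exact add_nonneg h1 (mul_nonneg h2 h3)
    have hBent : ∀ i j, (B i j).im = 0 ∧ 0 ≤ (B i j).re := by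
      intro i j
      constructor
      · simp [hB]
      · simpa [hB] using hent i j
    have hmain := h B hBpsd hBent
    have hdiag : ∀ i, (B i i).re = 1 + t * v i ^ 2 := by
      intro i
      simp only [hB, Matrix.of_apply, Complex.ofReal_re]
      ring
    have hre : (Matrix.hadamard A B).permanent.re
        = ∑ σ : Equiv.Perm (Fin (n+1)), (∏ m, A (σ m) m).re
            * ∏ m, (1 + t * (v (σ m) * v m)) := by
      rw [Matrix.permanent, Complex.re_sum]
      refine Finset.sum_congr rfl fun σ _ => ?_
      have : (∏ m, (Matrix.hadamard A B) (σ m) m)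
          = (∏ m, A (σ m) m) * ((∏ m, (1 + t * (v (σ m) * v m)) : ℝ) : ℂ) := by
        rw [Complex.ofReal_prod, ← Finset.prod_mul_distrib]
        refine Finset.prod_congr rfl fun m _ => ?_
        simp [Matrix.hadamard_apply, hB]
      rw [this, Complex.mul_re, Complex.ofReal_re, Complex.ofReal_im, mul_zero, sub_zero]
    rw [hg]
    simp only
    rw [← hre]
    have : P * ∏ m, (1 + t * v m ^ 2) = P * ∏ i, (B i i).re := by
      rw [Finset.prod_congr rfl fun i _ => (hdiag i)]
    rw [this]
    linarith [hmain]
  -- step (b,c): derivative of g at 0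
  set D : ℝ := ∑ σ : Equiv.Perm (Fin (n+1)), (∏ m, A (σ m) m).re * (∑ m, v (σ m) * v m)
    with hD
  have hderiv : HasDerivAt g (P * S - D) 0 := by
    have h1 : HasDerivAt (fun t : ℝ => P * ∏ m, (1 + t * v m ^ 2)) (P * S) 0 := by
      simpa [hS] using (prod_deriv (fun m => v m ^ 2)).const_mul P
    have h2 : HasDerivAt (fun t : ℝ => ∑ σ : Equiv.Perm (Fin (n+1)),
        (∏ m, A (σ m) m).re * ∏ m, (1 + t * (v (σ m) * v m))) D 0 := by
      rw [hD]
      exact HasDerivAt.fun_sum fun σ _ => (prod_deriv (fun m => v (σ m) * v m)).const_mul _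
    exact h1.sub h2
  have hg0 : g 0 = 0 := by
    have h1 : g 0 = P - ∑ σ : Equiv.Perm (Fin (n+1)), (∏ m, A (σ m) m).re := by
      simp [hg]
    rw [h1, hP, Matrix.permanent, Complex.re_sum, sub_self]
  -- step (e): slope argument
  have hslope : Filter.Tendsto (slope g 0) (nhdsWithin 0 (Set.Ioi 0)) (nhds (P * S - D)) :=
    (hasDerivAt_iff_tendsto_slope.mp hderiv).mono_left
      (nhdsWithin_mono _ (fun x hx => ne_of_gt hx))
  have hle : 0 ≤ P * S - D := by
    refine ge_of_tendsto hslope ?_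
    filter_upwards [Ioc_mem_nhdsGT_of_mem ⟨le_refl (0:ℝ), hδ0⟩] with t ht
    rw [slope_def_field]
    rw [hg0, sub_zero, sub_zero]
    exact div_nonneg (key t ht) ht.1.le
  -- step (d): D equals the quadratic form
  have hDQ : D = ∑ i, ∑ j, v i * (Fmat A i j).re * v j := by
    have hkey := congrArg Complex.re (keyid A v)
    rw [Complex.re_sum, Complex.re_sum] at hkey
    have hL : ∀ σ : Equiv.Perm (Fin (n+1)),
        ((∏ m, A (σ m) m) * (∑ k, ((v (σ k) : ℂ) * v k))).re
          = (∏ m, A (σ m) m).re * (∑ m, v (σ m) * v m) := by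
      intro σ
      have : (∑ k, ((v (σ k) : ℂ) * v k)) = ((∑ m, v (σ m) * v m : ℝ) : ℂ) := by
        push_cast; ring
      rw [this]
      simp [Complex.mul_re]
    have hR : ∀ k, (∑ i, (v i : ℂ) * v k * Fmat A i k).re
        = ∑ i, v i * (Fmat A i k).re * v k := by
      intro k
      rw [Complex.re_sum]
      refine Finset.sum_congr rfl fun i _ => ?_
      simp [Complex.mul_re]
      ring
    rw [Finset.sum_congr rfl fun σ _ => hL σ, Finset.sum_congr rfl fun k _ => hR k] at hkey
    rw [hD, hkey, Finset.sum_comm]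
  rw [← hDQ]
  linarith [hle]
end

section
/- If A ∈ H_n (with n ≥ 1) has rank one, then F_A = (per(A)/n)·E, where E is the n×n matrix all of whose entries equal 1. -/
open Matrix Finset
open scoped ComplexOrder

/-- The permanent of a rank-one matrix `u i * w j` is `m! * (∏ u) * (∏ w)`. -/
lemma permanent_mul_form {ι : Type*} [DecidableEq ι] [Fintype ι] (u w : ι → ℂ) :
    Matrix.permanent (Matrix.of fun i j => u i * w j)
      = (Nat.factorial (Fintype.card ι) : ℂ) * ((∏ i, u i) * ∏ i, w i) := by
  unfold Matrix.permanent
  have h : ∀ σ : Equiv.Perm ι, (∏ i, (u (σ i) * w i)) = (∏ i, u i) * ∏ i, w i := by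
    intro σ
    rw [Finset.prod_mul_distrib, Equiv.prod_comp σ u]
  simp_rw [Matrix.of_apply]
  simp_rw [h]
  rw [Finset.sum_const, Finset.card_univ, Fintype.card_perm, nsmul_eq_mul]

/-- If `A` is a rank-one positive semidefinite Hermitian matrix of size
`(n+1) × (n+1)`, then `F_A = (per(A)/(n+1)) · E`, where `E` is the all-ones matrix. -/
theorem stmt6 {n : ℕ} (A : Matrix (Fin (n + 1)) (Fin (n + 1)) ℂ) (hA : A.PosSemidef)
    (hrank : A.rank = 1) :
    Fmat A = Matrix.of fun _ _ => A.permanent / ((n : ℂ) + 1) := by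
  classical
  -- rank one gives a factorization A i j = u i * w j
  rw [Matrix.rank] at hrank
  obtain ⟨v, -, hv⟩ := (finrank_eq_one_iff' ).mp hrank
  obtain ⟨w, hw⟩ : ∃ w : Fin (n + 1) → ℂ, ∀ j, ∀ i, A i j = w j * (v : Fin (n + 1) → ℂ) i := by
    choose c hc using fun j =>
      hv ⟨A.mulVec (Pi.single j 1), LinearMap.mem_range.mpr ⟨Pi.single j 1, rfl⟩⟩
    refine ⟨c, fun j i => ?_⟩
    have := congrArg (fun x : LinearMap.range A.mulVecLin => (x : Fin (n + 1) → ℂ) i) (hc j)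
    simpa [Matrix.mulVec_single, mul_comm] using this.symm
  set u : Fin (n + 1) → ℂ := (v : Fin (n + 1) → ℂ) with hu
  have hAfac : ∀ i j, A i j = u i * w j := fun i j => by rw [hw j i, mul_comm]
  have hAeq : A = Matrix.of fun i j => u i * w j := by
    ext i j; exact hAfac i j
  -- permanent of A
  have hperA : A.permanent = ((n + 1).factorial : ℂ) * ((∏ i, u i) * ∏ i, w i) := by
    rw [hAeq, permanent_mul_form]
    simp
  have hn1 : ((n : ℂ) + 1) ≠ 0 := by
    exact_mod_cast Nat.cast_add_one_ne_zero (R := ℂ) n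
  ext i j
  -- submatrix is also of rank-one form
  have hsub : A.submatrix i.succAbove j.succAbove
      = Matrix.of fun k l => (u (i.succAbove k)) * (w (j.succAbove l)) := by
    ext k l
    exact hAfac _ _
  have hsubper : (A.submatrix i.succAbove j.succAbove).permanent
      = (n.factorial : ℂ) * ((∏ k : Fin n, u (i.succAbove k)) * ∏ l : Fin n, w (j.succAbove l)) := by
    rw [hsub, permanent_mul_form]
    simp
  have hui : (∏ k, u k) = u i * ∏ k : Fin n, u (i.succAbove k) :=
    Fin.prod_univ_succAbove u i
  have hwj : (∏ k, w k) = w j * ∏ l : Fin n, w (j.succAbove l) :=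
    Fin.prod_univ_succAbove w j
  show A i j * (A.submatrix i.succAbove j.succAbove).permanent = A.permanent / ((n : ℂ) + 1)
  rw [hsubper, hAfac i j, hperA, hui, hwj]
  have hfact : ((n + 1).factorial : ℂ) = ((n : ℂ) + 1) * (n.factorial : ℂ) := by
    push_cast [Nat.factorial_succ]
    ring
  rw [hfact]
  field_simp
end

section
/- If A ∈ H_n (with n ≥ 1) has rank one, then for every vector v ∈ ℂ^n one has v*F_A v ≤ per(A)·‖v‖₂²; equivalently, the largest eigenvalue of the Hermitian matrix F_A is at most per(A). -/
open Matrix Finset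
open scoped ComplexOrder

lemma per_outer {m : Type*} [DecidableEq m] [Fintype m] (a b : m → ℂ) :
    (Matrix.of fun i j => a i * b j).permanent =
      (Nat.factorial (Fintype.card m) : ℂ) * ((∏ i, a i) * ∏ j, b j) := by
  unfold Matrix.permanent
  have h : ∀ σ : Equiv.Perm m,
      (∏ i, (Matrix.of fun i j => a i * b j) (σ i) i) = (∏ i, a i) * ∏ j, b j := by
    intro σ
    simp only [Matrix.of_apply, Finset.prod_mul_distrib]
    rw [Equiv.prod_comp σ a]
  rw [Finset.sum_congr rfl fun σ _ => h σ, Finset.sum_const, Finset.card_univ,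
    Fintype.card_perm]
  simp [nsmul_eq_mul]

lemma outer_of_rank_one {n : ℕ} (A : Matrix (Fin (n + 1)) (Fin (n + 1)) ℂ)
    (hA : A.PosSemidef) (hrank : A.rank = 1) :
    ∃ u : Fin (n + 1) → ℂ, ∀ i j, A i j = u i * (starRingEnd ℂ) (u j) := by
  classical
  have h1 : Module.finrank ℂ (LinearMap.range A.mulVecLin) = 1 := hrank
  rw [finrank_eq_one_iff'] at h1
  obtain ⟨⟨g, hg⟩, hgne, hall⟩ := h1
  -- columns are multiples of g
  have hcol : ∀ j, ∃ c : ℂ, ∀ i, A i j = c * g i := by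
    intro j
    have hmem : (fun i => A i j) ∈ LinearMap.range A.mulVecLin := by
      refine ⟨Pi.single j 1, ?_⟩
      ext i
      simp [Matrix.mulVecLin_apply, Matrix.mulVec_single]
    obtain ⟨c, hc⟩ := hall ⟨_, hmem⟩
    refine ⟨c, fun i => ?_⟩
    have := congrArg (fun w : (LinearMap.range A.mulVecLin) => (w : (Fin (n+1) → ℂ)) i) hc
    simpa using this.symm
  choose c hc using hcol
  -- A nonzero
  have hA0 : A ≠ 0 := by
    intro h0
    rw [h0, Matrix.rank_zero] at hrank
    omega
  obtain ⟨i0, j0, hij⟩ : ∃ i j, A i j ≠ 0 := by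
    by_contra h
    push_neg at h
    exact hA0 (by ext i j; simp [h])
  have hgi0 : g i0 ≠ 0 := by
    intro h; exact hij (by rw [hc j0 i0, h, mul_zero])
  -- hermitian relation
  have herm : ∀ i j, A i j = (starRingEnd ℂ) (A j i) := fun i j => (hA.1.apply i j).symm
  -- c j = conj (g j) * k
  set k : ℂ := (starRingEnd ℂ) (c i0) / g i0 with hk
  have hcj : ∀ j, c j = (starRingEnd ℂ) (g j) * k := by
    intro j
    have h1 : c j * g i0 = (starRingEnd ℂ) (c i0) * (starRingEnd ℂ) (g j) := by
      have h2 := herm i0 j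
      rw [hc j i0, hc i0 j] at h2
      rw [h2, RingHom.map_mul (starRingEnd ℂ)]
    rw [hk, mul_div_assoc', eq_div_iff hgi0]
    linear_combination h1
  have hAij : ∀ i j, A i j = k * g i * (starRingEnd ℂ) (g j) := by
    intro i j
    rw [hc j i, hcj j]; ring
  -- k is a nonneg real
  have hdiag : 0 ≤ A i0 i0 := by
    have h2 := hA.dotProduct_mulVec_nonneg (Pi.single i0 1)
    have : star (Pi.single i0 1 : Fin (n+1) → ℂ) ⬝ᵥ A *ᵥ Pi.single i0 1 = A i0 i0 := by
      simp [dotProduct, Matrix.mulVec, Pi.single_apply, Finset.sum_ite_eq, mul_comm]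
    rwa [this] at h2
  have hval : A i0 i0 = k * Complex.normSq (g i0) := by
    rw [hAij i0 i0, mul_assoc, Complex.mul_conj]
  have hns : (0:ℝ) < Complex.normSq (g i0) := Complex.normSq_pos.2 hgi0
  have hk_nonneg : 0 ≤ k := by
    have := hdiag
    rw [hval] at this
    rw [Complex.le_def] at this ⊢
    simp only [Complex.zero_re, Complex.zero_im, Complex.mul_re, Complex.mul_im,
      Complex.ofReal_re, Complex.ofReal_im] at this ⊢
    constructor
    · nlinarith [this.1]
    · nlinarith [this.2]
  -- build u
  obtain ⟨r, hr, hrk⟩ : ∃ r : ℝ, 0 ≤ r ∧ k = (r:ℂ) := by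
    rw [Complex.le_def] at hk_nonneg
    exact ⟨k.re, hk_nonneg.1, by
      apply Complex.ext <;> simp [hk_nonneg.2.symm]⟩
  refine ⟨fun i => (Real.sqrt r : ℂ) * g i, fun i j => ?_⟩
  rw [hAij i j, hrk]
  have : ((Real.sqrt r : ℂ)) * (Real.sqrt r : ℂ) = (r : ℂ) := by
    rw [← Complex.ofReal_mul, Real.mul_self_sqrt hr]
  rw [RingHom.map_mul (starRingEnd ℂ), Complex.conj_ofReal, ← this]
  ring

/-- If `A` is a rank-one positive semidefinite Hermitian matrix, then
`v* F_A v ≤ per(A) · ‖v‖₂²` for every vector `v`, i.e. `λ_max(F_A) ≤ per(A)`. -/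
theorem stmt7 {n : ℕ} (A : Matrix (Fin (n + 1)) (Fin (n + 1)) ℂ) (hA : A.PosSemidef)
    (hrank : A.rank = 1) :
    ∀ v : Fin (n + 1) → ℂ,
      (∑ i, ∑ j, (starRingEnd ℂ) (v i) * Fmat A i j * v j).re ≤
        A.permanent.re * ∑ i, ‖v i‖ ^ 2 := by
  intro v
  obtain ⟨u, hu⟩ := outer_of_rank_one A hA hrank
  set Q : ℂ := ∏ x, u x with hQ
  set S : ℂ := ∑ j, v j with hS
  have hPfact : ∀ p : Fin (n+1), u p * ∏ k : Fin n, u (p.succAbove k) = Q :=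
    fun p => (Fin.prod_univ_succAbove u p).symm
  have hAeq : A = Matrix.of fun i j => u i * (starRingEnd ℂ) (u j) := by
    ext i j; exact hu i j
  have hperA : A.permanent = ((((n+1).factorial : ℝ) * Complex.normSq Q : ℝ) : ℂ) := by
    rw [hAeq, per_outer]
    rw [← map_prod (starRingEnd ℂ), ← hQ, Complex.mul_conj]
    push_cast [Fintype.card_fin]
    ring
  have hsub : ∀ i j : Fin (n+1), (A.submatrix i.succAbove j.succAbove).permanent =
      (n.factorial : ℂ) * ((∏ k : Fin n, u (i.succAbove k)) *
        ∏ l : Fin n, (starRingEnd ℂ) (u (j.succAbove l))) := by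
    intro i j
    have h1 : A.submatrix i.succAbove j.succAbove =
        Matrix.of fun k l => u (i.succAbove k) * (starRingEnd ℂ) (u (j.succAbove l)) := by
      ext k l; exact hu _ _
    rw [h1, per_outer]
    simp [Fintype.card_fin]
  have hterm : ∀ i j : Fin (n+1), (starRingEnd ℂ) (v i) * Fmat A i j * v j =
      (n.factorial : ℂ) * (((starRingEnd ℂ) (v i) * Q) * (v j * (starRingEnd ℂ) Q)) := by
    intro i j
    have e1 : (starRingEnd ℂ) Q = (starRingEnd ℂ) (u j) *
        ∏ l : Fin n, (starRingEnd ℂ) (u (j.succAbove l)) := by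
      rw [← hPfact j, RingHom.map_mul, ← map_prod]
    simp only [Fmat, Matrix.of_apply]
    rw [hu i j, hsub i j, e1, ← hPfact i]
    ring
  have key : (∑ i, ∑ j, (starRingEnd ℂ) (v i) * Fmat A i j * v j) =
      ((((n.factorial : ℝ)) * (Complex.normSq Q * Complex.normSq S) : ℝ) : ℂ) := by
    simp_rw [hterm, ← Finset.mul_sum, ← Finset.sum_mul]
    rw [← map_sum (starRingEnd ℂ), ← hS]
    have : (starRingEnd ℂ) S * Q * (S * (starRingEnd ℂ) Q) =
        (S * (starRingEnd ℂ) S) * (Q * (starRingEnd ℂ) Q) := by ring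
    rw [this, Complex.mul_conj, Complex.mul_conj]
    push_cast
    ring
  rw [key, hperA]
  simp only [Complex.ofReal_re]
  have hns : (0:ℝ) ≤ Complex.normSq Q := Complex.normSq_nonneg Q
  have h1 : ‖S‖ ≤ ∑ i, ‖v i‖ := norm_sum_le _ _
  have h2 : (∑ i, ‖v i‖)^2 ≤ (n+1 : ℝ) * ∑ i, ‖v i‖^2 := by
    have := sq_sum_le_card_mul_sum_sq (s := (Finset.univ : Finset (Fin (n+1))))
      (f := fun i => ‖v i‖)
    simpa using this
  have hSsq : Complex.normSq S ≤ (n+1 : ℝ) * ∑ i, ‖v i‖^2 := by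
    have hnn : (0:ℝ) ≤ ‖S‖ := norm_nonneg _
    have : Complex.normSq S = ‖S‖^2 := by
      rw [Complex.normSq_eq_norm_sq]
    rw [this]
    calc ‖S‖^2 ≤ (∑ i, ‖v i‖)^2 := by nlinarith [Finset.sum_nonneg (fun i (_ : i ∈ Finset.univ) => norm_nonneg (v i))]
      _ ≤ _ := h2
  have hfact : ((n+1).factorial : ℝ) = (n+1 : ℝ) * (n.factorial : ℝ) := by
    push_cast [Nat.factorial_succ]; ring
  rw [hfact]
  have hmul := mul_le_mul_of_nonneg_left hSsq
    (by positivity : (0:ℝ) ≤ (n.factorial : ℝ) * Complex.normSq Q)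
  nlinarith [hmul]
end

section
/- If A ∈ H_n (with n ≥ 1) has all entries nonnegative real numbers (a_{i,j} ≥ 0 for all i, j), then for every vector v ∈ ℂ^n one has v*F_A v ≤ per(A)·‖v‖₂²; equivalently, the largest eigenvalue of the Hermitian matrix F_A is at most per(A). -/
open Matrix Finset
open scoped ComplexOrder

theorem perm_succ_col_zero' {R : Type*} [CommRing R] {n : ℕ} (A : Matrix (Fin n.succ) (Fin n.succ) R) :
    A.permanent = ∑ i : Fin n.succ, A i 0 * (A.submatrix i.succAbove Fin.succ).permanent := by
  rw [Matrix.permanent, Finset.univ_perm_fin_succ, ← Finset.univ_product_univ]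
  simp only [Finset.sum_map, Equiv.toEmbedding_apply, Finset.sum_product, Matrix.submatrix]
  refine Finset.sum_congr rfl fun i _ => Fin.cases ?_ (fun i => ?_) i
  · simp [Fin.prod_univ_succ, Matrix.permanent, Finset.mul_sum,
      Equiv.Perm.decomposeFin_symm_apply_zero,
      Equiv.Perm.decomposeFin_symm_apply_succ, Fin.succAbove_zero]
  · rw [← Matrix.permanent_permute_cols i.cycleRange, Matrix.permanent, Finset.mul_sum]
    refine Finset.sum_congr rfl fun σ _ => ?_
    simp only [Fin.prod_univ_succ, Equiv.Perm.decomposeFin_symm_apply_zero,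
      Equiv.Perm.decomposeFin_symm_apply_succ, Matrix.submatrix_apply, Equiv.coe_trans,
      Function.comp, Fin.succAbove_cycleRange, Matrix.of_apply, id_eq]

theorem perm_succ_row_zero' {R : Type*} [CommRing R] {n : ℕ} (A : Matrix (Fin n.succ) (Fin n.succ) R) :
    A.permanent = ∑ j : Fin n.succ, A 0 j * (A.submatrix Fin.succ j.succAbove).permanent := by
  rw [← Matrix.permanent_transpose A, perm_succ_col_zero']
  refine Finset.sum_congr rfl fun j _ => ?_
  rw [← Matrix.permanent_transpose]
  simp [Matrix.transpose_submatrix]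

theorem perm_succ_row' {R : Type*} [CommRing R] {n : ℕ} (A : Matrix (Fin n.succ) (Fin n.succ) R)
    (i : Fin n.succ) :
    A.permanent = ∑ j : Fin n.succ, A i j * (A.submatrix i.succAbove j.succAbove).permanent := by
  rw [← Matrix.permanent_permute_cols i.cycleRange⁻¹ A, perm_succ_row_zero']
  refine Finset.sum_congr rfl fun j _ => ?_
  rw [Matrix.submatrix_apply, Matrix.submatrix_submatrix, Function.id_comp]
  congr
  · rw [Equiv.Perm.inv_def, Fin.cycleRange_symm_zero]
  · ext i' j'
    rw [Equiv.Perm.inv_def, Function.comp_apply,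
      Fin.cycleRange_symm_succ]

theorem perm_succ_col' {R : Type*} [CommRing R] {n : ℕ} (A : Matrix (Fin n.succ) (Fin n.succ) R)
    (j : Fin n.succ) :
    A.permanent = ∑ i : Fin n.succ, A i j * (A.submatrix i.succAbove j.succAbove).permanent := by
  rw [← Matrix.permanent_transpose A, perm_succ_row' Aᵀ j]
  refine Finset.sum_congr rfl fun i _ => ?_
  rw [← Matrix.permanent_transpose]
  simp [Matrix.transpose_submatrix]

theorem permanent_map_ofReal {m : Type*} [DecidableEq m] [Fintype m] (M : Matrix m m ℝ) :
    (M.map (Complex.ofReal)).permanent = (M.permanent : ℂ) := by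
  simp [Matrix.permanent, Matrix.map_apply]

theorem permanent_nonneg_of_nonneg {m : Type*} [DecidableEq m] [Fintype m] (M : Matrix m m ℝ)
    (h : ∀ i j, 0 ≤ M i j) : 0 ≤ M.permanent :=
  Finset.sum_nonneg fun σ _ => Finset.prod_nonneg fun i _ => h _ _


/-- If `A` is positive semidefinite Hermitian with all entries nonnegative reals,
then `v* F_A v ≤ per(A) · ‖v‖₂²` for every vector `v`, i.e. `λ_max(F_A) ≤ per(A)`. -/
theorem stmt8 {n : ℕ} (A : Matrix (Fin (n + 1)) (Fin (n + 1)) ℂ) (hA : A.PosSemidef)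
    (hAnonneg : ∀ i j, (A i j).im = 0 ∧ 0 ≤ (A i j).re) :
    ∀ v : Fin (n + 1) → ℂ,
      (∑ i, ∑ j, (starRingEnd ℂ) (v i) * Fmat A i j * v j).re ≤
        A.permanent.re * ∑ i, ‖v i‖ ^ 2 := by
  intro v
  set B : Matrix (Fin (n + 1)) (Fin (n + 1)) ℝ := Matrix.of fun i j => (A i j).re with hB
  have hAB : A = B.map (Complex.ofReal) := by
    ext i j
    simp only [Matrix.map_apply, hB, Matrix.of_apply]
    rw [← Complex.re_add_im (A i j), (hAnonneg i j).1]
    simp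
  have hBnn : ∀ i j, 0 ≤ B i j := fun i j => (hAnonneg i j).2
  set g : Fin (n + 1) → Fin (n + 1) → ℝ :=
    fun i j => B i j * (B.submatrix i.succAbove j.succAbove).permanent with hgdef
  have hg : ∀ i j, 0 ≤ g i j := fun i j =>
    mul_nonneg (hBnn i j) (permanent_nonneg_of_nonneg _ fun _ _ => hBnn _ _)
  have hF : ∀ i j, Fmat A i j = ((g i j : ℝ) : ℂ) := by
    intro i j
    have : A.submatrix i.succAbove j.succAbove
        = (B.submatrix i.succAbove j.succAbove).map (Complex.ofReal) := by
      rw [hAB]; ext i' j' <;> simp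
    have hAij : A i j = ((B i j : ℝ) : ℂ) := by rw [hAB]; simp
    simp only [Fmat, Matrix.of_apply]
    rw [this, permanent_map_ofReal, hAij, ← Complex.ofReal_mul]
  have hperA : A.permanent = ((B.permanent : ℝ) : ℂ) := by
    rw [hAB, permanent_map_ofReal]
  have hrow : ∀ i, ∑ j, g i j = B.permanent := fun i => (perm_succ_row' B i).symm
  have hcol : ∀ j, ∑ i, g i j = B.permanent := fun j => (perm_succ_col' B j).symm
  set x : Fin (n + 1) → ℝ := fun i => ‖v i‖ with hx
  calc (∑ i, ∑ j, (starRingEnd ℂ) (v i) * Fmat A i j * v j).re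
      = ∑ i, ∑ j, ((starRingEnd ℂ) (v i) * Fmat A i j * v j).re := by
        simp [Complex.re_sum]
    _ ≤ ∑ i, ∑ j, g i j * (x i * x j) := by
        refine Finset.sum_le_sum fun i _ => Finset.sum_le_sum fun j _ => ?_
        rw [hF i j]
        have h1 : (starRingEnd ℂ) (v i) * ((g i j : ℝ) : ℂ) * v j
            = ((g i j : ℝ) : ℂ) * ((starRingEnd ℂ) (v i) * v j) := by ring
        rw [h1, Complex.re_ofReal_mul]
        refine mul_le_mul_of_nonneg_left ?_ (hg i j)
        calc ((starRingEnd ℂ) (v i) * v j).re ≤ ‖(starRingEnd ℂ) (v i) * v j‖ :=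
              Complex.re_le_norm _
          _ = x i * x j := by simp [hx]
    _ ≤ ∑ i, ∑ j, g i j * ((x i ^ 2 + x j ^ 2) / 2) := by
        refine Finset.sum_le_sum fun i _ => Finset.sum_le_sum fun j _ => ?_
        refine mul_le_mul_of_nonneg_left ?_ (hg i j)
        nlinarith [sq_nonneg (x i - x j)]
    _ = B.permanent * ∑ i, x i ^ 2 := by
        have hsplit : ∀ i j : Fin (n + 1), g i j * ((x i ^ 2 + x j ^ 2) / 2)
            = g i j * x i ^ 2 / 2 + g i j * x j ^ 2 / 2 := by intros; ring
        simp_rw [hsplit, Finset.sum_add_distrib]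
        have e1 : ∑ i, ∑ j, g i j * x i ^ 2 / 2 = ∑ i, B.permanent * x i ^ 2 / 2 := by
          refine Finset.sum_congr rfl fun i _ => ?_
          simp_rw [mul_comm (g i _), mul_div_assoc]
          rw [← Finset.mul_sum, ← Finset.sum_div, hrow i]
          ring
        have e2 : ∑ i, ∑ j, g i j * x j ^ 2 / 2 = ∑ j, B.permanent * x j ^ 2 / 2 := by
          rw [Finset.sum_comm]
          refine Finset.sum_congr rfl fun j _ => ?_
          simp_rw [mul_comm (g _ j), mul_div_assoc]
          rw [← Finset.mul_sum, ← Finset.sum_div, hcol j]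
          ring
        rw [e1, e2, ← Finset.sum_add_distrib, Finset.mul_sum]
        refine Finset.sum_congr rfl fun i _ => ?_
        ring
    _ = A.permanent.re * ∑ i, ‖v i‖ ^ 2 := by
        rw [hperA]
        simp [hx]
end

section
/- Let X = X_R + i·X_I be the 2×16 complex matrix with X_R having rows (25, −23, 29, 11, −20, 47, 18, 29, 35, −25, −32, −28, −18, 25, 12, −36) and (8, 38, −11, 34, 61, 42, −23, 10, 35, 24, 11, 9, 13, −9, 34, 22), and X_I having rows (30, 20, 51, −43, −11, 47, 4, 27, −26, −2, 11, 37, 64, 26, −28, 23) and (0, 20, 10, 4, 28, 12, −46, 24, −43, 10, −17, −63, −23, 50, −40, 15). Then A = X*X is a 16×16 positive semidefinite Hermitian matrix for which there exists a real vector v ∈ ℝ^16 with ∑_{i,j} v_i·Re(f_{i,j})·v_j > per(A)·‖v‖₂²; equivalently, the largest eigenvalue of the real symmetric matrix Re(F_A) strictly exceeds per(A). -/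
open Matrix Finset
open scoped ComplexOrder

/-- The real part `X_R` of the `2 × 16` matrix `X`. -/
def XR : Matrix (Fin 2) (Fin 16) ℝ :=
  !![25, -23, 29, 11, -20, 47, 18, 29, 35, -25, -32, -28, -18, 25, 12, -36;
     8, 38, -11, 34, 61, 42, -23, 10, 35, 24, 11, 9, 13, -9, 34, 22]

/-- The imaginary part `X_I` of the `2 × 16` matrix `X`. -/
def XI : Matrix (Fin 2) (Fin 16) ℝ :=
  !![30, 20, 51, -43, -11, 47, 4, 27, -26, -2, 11, 37, 64, 26, -28, 23;
     0, 20, 10, 4, 28, 12, -46, 24, -43, 10, -17, -63, -23, 50, -40, 15]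

/-- `X = X_R + i X_I`. -/
noncomputable def Xmat : Matrix (Fin 2) (Fin 16) ℂ :=
  Matrix.of fun r c => (XR r c : ℂ) + Complex.I * (XI r c : ℂ)

def gxL : Fin 16 → GaussianInt := ![⟨25, 30⟩, ⟨-23, 20⟩, ⟨29, 51⟩, ⟨11, -43⟩, ⟨-20, -11⟩, ⟨47, 47⟩, ⟨18, 4⟩, ⟨29, 27⟩, ⟨35, -26⟩, ⟨-25, -2⟩, ⟨-32, 11⟩, ⟨-28, 37⟩, ⟨-18, 64⟩, ⟨25, 26⟩, ⟨12, -28⟩, ⟨-36, 23⟩]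
def gyL : Fin 16 → GaussianInt := ![⟨8, 0⟩, ⟨38, 20⟩, ⟨-11, 10⟩, ⟨34, 4⟩, ⟨61, 28⟩, ⟨42, 12⟩, ⟨-23, -46⟩, ⟨10, 24⟩, ⟨35, -43⟩, ⟨24, 10⟩, ⟨11, -17⟩, ⟨9, -63⟩, ⟨13, -23⟩, ⟨-9, 50⟩, ⟨34, -40⟩, ⟨22, 15⟩]
def gvL : Fin 16 → ℤ := ![1, -3, 1, 1, -4, 2, -4, 2, 4, -2, -1, -2, -1, 3, 4, -1]
def gl0 : List GaussianInt := [⟨279248614355856746165760, 105750686717231436391680⟩, ⟨31623666540437016469632, -1161867281433838151812224⟩, ⟨-1695778512785068459113664, 2436000697998865077442048⟩, ⟨1575313091250385789594432, 2060584696612330174885504⟩, ⟨785591116538489411670592, -4915901701604933466084640⟩, ⟨-4896521159440086951048320, 2820570211164617385616416⟩, ⟨7092306705102915408692624, 16552431209122521650240352⟩, ⟨17044782429841658821639760, -10992493593887209180447936⟩, ⟨-23962022772643453851009072, 245549176008721431567336⟩, ⟨-5316014796568133592646104, 9525809790422535464942016⟩, ⟨9877875459229734855311344, -9455390286470573045742808⟩,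 ⟨-4121251394266062055140424, -2463516773814497229295744⟩, ⟨456918884630614631878496, 8664890061148584459114592⟩, ⟨425600193380107243879424, -675244536613506893249232⟩, ⟨-1354414291754255734678880, -1001810032459435593428160⟩, ⟨438329714779241015492800, 173374137293092170289600⟩]
def gl1 : List GaussianInt := [⟨55212412494000802959360, -6795862003741172843520⟩, ⟨112120105330271548653312, -46754416721992392825984⟩, ⟨359522629378638496920768, -503109808800682858635776⟩, ⟨-2072824647911821091738560, 1294890905462267387091008⟩, ⟨635837599962516867291712, 3104448113805226176929568⟩, ⟨4021369762582959482599712, -2592291789158974740671456⟩, ⟨-3170709986863463417302224, -542048328846140553434464⟩, ⟨899196750409676087437776, 15042189099885982735302640⟩, ⟨24396492176342329669136144, 2067160453117810378184616⟩, ⟨-12637935280662716485078680, -21687945340725997921169888⟩, ⟨-24563993571312541830381296, 6532566125646368647382024⟩, ⟨8699312016250801667984440, 13362790116202974311029680⟩, ⟨9295051335309583000494496, -4432879869544602656041728⟩, ⟨-3155217539553103456257440, 4603917370251139855920⟩, ⟨-526112300038751326594400, 1621181553098498213459200⟩, ⟨233878865713951246536000, -556811633105456947448000⟩]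
def gl2 : List GaussianInt := [⟨-72913226814194021498880, -143194341989071973283840⟩, ⟨490358189316002034107904, -426719630834795005532928⟩, ⟨-269248302814777424651904, 1686443798945563364928128⟩, ⟨58678364948486708143680, 840968248730394676852736⟩, ⟨204734160895486739378048, -2728979918679202290314176⟩, ⟨489655909373126920092288, 1178439182941449246105376⟩, ⟨5055263243424346315666464, 4878340904425633173413056⟩, ⟨10322868952132709297510320, -3283730133249155724557504⟩, ⟨-13567594624875720158057280, 5187879089967831817250256⟩, ⟨-4752183231269645470176384, 4317710080310385087193176⟩, ⟨4523442371173616717310816, -6812273393251761705046376⟩, ⟨-625898344429171469010168, -1214793031213644839545376⟩, ⟨1241840645810480695872736, 5561357606470634400552952⟩, ⟨-110045515026684726788040, -128643036455357222778280⟩, ⟨-956851827738035657960400, -616718157030608849462800⟩, ⟨307568283681258227456000, 62009048550357417992000⟩]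
def gl3 : List GaussianInt := [⟨67695942900805836963840, 16918285945136121861120⟩, ⟨90314751995824565983488, 120289786426195248979584⟩, ⟨441035088789055853199744, -229816474284289338116608⟩, ⟨-2674562633201384228125984, 1726531770799421643561792⟩, ⟨-2023214580239426345606640, -1954658466044561593378736⟩, ⟨6310121531552825516394064, -4926550508960828606369488⟩, ⟨1074211280437643748778976, 11096132544190677535022848⟩, ⟨-17911300744650098866105256, 15718201843569836877937344⟩, ⟨70982266893384619554588, -20731604556195784964338884⟩, ⟨5629061946205804870564836, -12586230460175274772212852⟩, ⟨5359831771138224021899316, 10649427948117045009389908⟩, ⟨-34163109753288238195508, 4520855399802383308016700⟩, ⟨-6937821916283861687482224, -4098631651065817076304448⟩, ⟨119152886396941994943560, -846768941451318747468680⟩, ⟨1608160149864142167439600, -121241058883338130214800⟩, ⟨-349490011877017324864000, 223288578635708159352000⟩]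
def gl4 : List GaussianInt := [⟨35507542204288109629440, -2429601442331402926080⟩, ⟨77829963471683510949888, -1819027781488755392256⟩, ⟨271909064987676066898560, -252519200536690312167808⟩, ⟨-1129715100631145963139904, 919409478051162820035584⟩, ⟨-255027278242300349265088, 1189325963685990506834240⟩, ⟨1139511754006178525551040, -1437546840225741108815200⟩, ⟨-1264813531270068294286240, 1233385926787017264846816⟩, ⟨411776345912967115484784, 8817460076004251555728160⟩, ⟨9044266436884030951884080, 2723521435221542775781552⟩, ⟨-9742677029436851671033232, -3438740313464233659774856⟩, ⟨-7800056511278885281232128, 745557496630713783210848⟩, ⟨4324422822573504744188864, -2487376037686882845659352⟩, ⟨462762044271637561128576, -2148238485724435625449168⟩, ⟨-1711147527905872474062640, 3851895169321126643039520⟩, ⟨-479019450469387824206400, 975413726540833687895200⟩, ⟨-590147924465480014424000, -549630885329212728168000⟩]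
def gl5 : List GaussianInt := [⟨54496645884917235118080, 4572517693305825469440⟩, ⟨31153533870437882232576, -33900136844903698908032⟩, ⟨365403346329205085727232, -306326577899821198253824⟩, ⟨-2810168349786799830563680, 1368017898109018328981888⟩, ⟨4767387164471006100026384, 1667124328456762326317168⟩, ⟨-2775938460033248611318672, -8235143476234710664747376⟩, ⟨-5349064087245686948214416, 15184468814772269730108592⟩, ⟨17697909689260780408173544, -3238069186543474418426304⟩, ⟨-12015043081170368496169836, -7069915718988801261274980⟩, ⟨-7530547365789196290272940, 8353432298601096144324500⟩, ⟨8732578186705366475486492, -3343925035973068961143724⟩, ⟨-2879704792879538608299188, -4249211146315518528407516⟩, ⟨-599230148806966284292016, 5389130243897515812453088⟩, ⟨798563479902999291133240, -232862010794448191165320⟩, ⟨-868980861920650976347600, -673518728063429279633200⟩, ⟨247247485387157393624000, 124757724734215685568000⟩]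
def gl6 : List GaussianInt := [⟨-34139129585413538709504, 31495411617007447369728⟩, ⟨-64295852012617839524352, 72247075487352931985664⟩, ⟨-36697694171256060295040, 493101058184416646647680⟩, ⟨562386030994798465095232, -1897916034541063850331648⟩, ⟨-1294390301692240509281600, -1383382050430315319562112⟩, ⟨-455100334213517014774720, 2940061939737341743802592⟩, ⟨1047520997603259711921152, -2309709673053254901300384⟩, ⟨-8183027996980483224011248, -8678497169282441354104736⟩, ⟨-13318781535933212308548432, 8053189702686199231859328⟩, ⟨15942520560278247873076176, -224268774455450834812056⟩, ⟨6442932492123408295230152, -10420144735152899982309744⟩, ⟨-6470032308692519421171136, 4155966891781981964861448⟩, ⟨1930897499517398859105272, 3304883935811342038159504⟩, ⟨-424149342994637956462352, -6008934398012952050768064⟩, ⟨-1731483778312426217261600, -786155428705658390581200⟩, ⟨510480344162373011480800, 857906861058613482005600⟩]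
def gl7 : List GaussianInt := [⟨63082871299078366095360, -66798341744002929515520⟩, ⟨75935055521742975508992, 13776040011492073942656⟩, ⟨-93093269256274343129216, -882547965291166892965888⟩, ⟨104791835538703853397344, 5210374484975256924068864⟩, ⟨-1557235210389435604027216, -5710979803450064001177872⟩, ⟨4926989177461941024450992, 1265077736682831753900240⟩, ⟨-7867517895020604652939232, 7514253749411298245814144⟩, ⟨22599039022674093337765240, -922727948149673353241264⟩, ⟨-13962931950582979575009804, -980904984572917648489644⟩, ⟨-12205217969749940716768692, 6185516303664834151236036⟩, ⟨8120515083514681748758364, -4170977105562935852506628⟩, ⟨150916976377280556694708, -6167420620201425917305244⟩, ⟨-814638197792209610920496, 7842541568651219051949728⟩, ⟨547762310888402493455416, 634309216290764243360712⟩, ⟨-1293577835401016628190960, -1426626949040457106644720⟩, ⟨407024302811453493996800, 223951334475699668417600⟩]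
def gl8 : List GaussianInt := [⟨13601618669132164869120, 40882145614586702300160⟩, ⟨19643744733789122454144, 42678153130731915768192⟩, ⟨365130167515521643313664, 174503792886525946077952⟩, ⟨-1786654878414997628651232, -1340830529375757967338592⟩, ⟨86817338959182132937824, 1818742394416765215986816⟩, ⟨2816430522042865760793696, -487356225670186703031232⟩, ⟨-4736083130607255224086464, -1637966942161369455374432⟩, ⟨-6324402823982895188402136, 5739468365104218059536264⟩, ⟨9019091860627129804352616, 7457160293168656605584880⟩, ⟨-3915952216763156717979168, -23754446933174818319341704⟩, ⟨-5522628548570218036634376, 14146843885957485297498512⟩, ⟨12050675414577762537584136, -2294441800568060673354848⟩, ⟨-8297793685119067117136784, -2259669867010615805884688⟩, ⟨-50043431671539621774240, 2460622964146417134638320⟩, ⟨912485241899592520917600, -1723247298300345464036800⟩, ⟨-133137669907537502904000, 400647584517387418472000⟩]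
def gl9 : List GaussianInt := [⟨91828090079442322744320, -3011475294023822346240⟩, ⟨253059747727944644156544, -28997534680640594769408⟩, ⟨879983794572943176706496, -734525969705478334569472⟩, ⟨-2672482830713386934958720, 1526374428873375495853696⟩, ⟨-1688969508055222975324224, 4547953611705841817123360⟩, ⟨3216782386819487719185280, 57826252237041961188160⟩, ⟨-1539250999783908394438032, 3304575051929046155139104⟩, ⟨1050030541342166524135968, 25319816729803729246726912⟩, ⟨32087771675695462103877360, 23029720376123427073675176⟩, ⟨3855892439493539085723144, -1464826962340170242881248⟩, ⟨-8915184596245811848014128, 2636026473112322294074216⟩, ⟨10873997982603510008850504, -851096448587788531303072⟩, ⟨7100005216262966769758208, -7768158670678040736506144⟩, ⟨-1184527331015246034397120, 2365382447935515448294160⟩, ⟨153273770547920695288800, 1796049206552843642641600⟩, ⟨-284410108932616178712000, -676616986313572094584000⟩]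
def gl10 : List GaussianInt := [⟨24858011389687605642240, 115326517032958253368320⟩, ⟨-48909776781647184054912, 391984687419625581550464⟩, ⟨480687169094643847834880, 1149384814635741851430144⟩, ⟨-4413131550348294558656352, -1547194682572739637804704⟩, ⟨-7103560799077936154397824, -5661774530258271141636384⟩, ⟨3118321505298305474895104, -11526490722089809179803488⟩, ⟨9635671159627570372959904, -16664069071144868938759616⟩, ⟨2618708088150188902418760, -5098592991266639884413064⟩, ⟨13951084378685325717271536, 25791199654873208141484072⟩, ⟨712983698022414420805896, 4314700745552711524513728⟩, ⟨-12752090237409765566648528, -7594204753161000909020520⟩, ⟨2753314791543641134052784, -1426530509890087899565576⟩, ⟨9213883253022649621982192, -3200524036930312581879216⟩, ⟨-487749070872582833649680, 1169694782261085332203840⟩, ⟨-806893550384829279788800, 1540972234709191298362400⟩, ⟨7076064288843277752000, -543950255266476833336000⟩]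
def gl11 : List GaussianInt := [⟨-8195665647373569930240, 36630950883701842836480⟩, ⟨-35997343492338483219328, 87484551201659147143296⟩, ⟨129130813267497848856064, 367415991452602421708800⟩, ⟨-688466568306686626325408, -1261360721580843944067040⟩, ⟨-954024690749621649291392, -1166844017129114314877920⟩, ⟨1282276674771198473120768, 738384914894954310749024⟩, ⟨-648773263714071424166176, -1289344977174347024009024⟩, ⟨-8743509584295459169216584, -2699791087113574618393880⟩, ⟨-7078646592562674329395344, 4495166144938080420512376⟩, ⟨2356355946912003766198936, -11143386090795984087671712⟩, ⟨4638375856099958810154224, -11551180341331054920691960⟩, ⟨7519525604268390634329776, 2102281028950259765455432⟩, ⟨5799366931213009797547664, 3343910826104535610484848⟩, ⟨-1526394383749363616030960, 868660252728969118065280⟩, ⟨-1047193392457400060489600, 299811964079049502872800⟩, ⟨225601734965999301864000, -326320738641520019752000⟩]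
def gl12 : List GaussianInt := [⟨13730271543035125079040, 89369364555973797534720⟩, ⟨105841721803482223398528, 376196779374550351461504⟩, ⟨1178926111332748899024384, 1423308149102334309590912⟩, ⟨944261050386048597318624, -123260049481275358836192⟩, ⟨-25557980009388206821088, -291725008892741162541152⟩, ⟨4675269767138927551390384, 2088509065390394059670832⟩, ⟨8032005066398467476342416, -1603839632600501457550032⟩, ⟨-2484693686731006596873272, -4725027677005482028976648⟩, ⟨-6253251696393927359681416, 12972356554135747922782328⟩, ⟨1372444788633688554552756, 2212406248194181104834868⟩, ⟨-1746122586512406477215164, -6550176532545489392467132⟩, ⟨-248072919757497439500500, 2183566401628038926942676⟩, ⟨4046201422869020769783828, 2487473395047415215718356⟩, ⟨-597855845996809353206920, -231168664305036555289840⟩, ⟨-826403593225893231989200, 228220589884588962461600⟩, ⟨229720663921425687148000, -154562354707405041364000⟩]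
def gl13 : List GaussianInt := [⟨8599137719206078586880, -46227623086394173532160⟩, ⟨42276997350455183187456, -60505608452613357326592⟩, ⟨-226609535074919385655424, -348216508700838419042432⟩, ⟨1166901721173885888757824, 1915165087767468374784896⟩, ⟨-379246281033169808256768, -21170960770123140756224⟩, ⟨-1763137096867055935330624, -2420142757201841675893984⟩, ⟨3735526103985015300940608, 2710344620196474391133440⟩, ⟨7958280796673191593242160, 2684033490236556354632864⟩, ⟨-2205061956823462340101152, -8303609591988392589496992⟩, ⟨-4375152680344529508324144, 16981776751262109447254520⟩, ⟨-6698844904818863909364088, -3019274968900335664610440⟩, ⟨3570431496502276371984888, -12374848816366308482320784⟩, ⟨3471514384202409650986944, 8104673154908619208513808⟩, ⟨-893742534917035926232160, 2584579371266815504296880⟩, ⟨-1418706003484890412221600, -1936725991867458591491200⟩, ⟨460042917398558347224000, 220925160933680707768000⟩]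
def gl14 : List GaussianInt := [⟨15281350999738380011520, 42860574521393726223360⟩, ⟨9240083331920040259584, 59101223945545135773312⟩, ⟨382117932270157307559616, 183066425915046738785088⟩, ⟨-1897091591480216488967520, -1202053500803135330903744⟩, ⟨195629123105354325407712, 840530556246649871392832⟩, ⟨2440158418309039530044800, 477421710285293783512560⟩, ⟨-4102084577035769844236992, -1336762874214947441749776⟩, ⟨-7570936976746213524963192, 4028980585111238315795232⟩, ⟨7006397003999086151104248, 7600511889584526886652672⟩, ⟨-3953821754974111922816176, -20285158006403225980679788⟩, ⟨1432151901070087828182012, 5677136516238878986317936⟩, ⟨3788839047830397497973064, 4816810275674222145694348⟩, ⟨-1557554980788350491378716, -3821257937780269769821312⟩, ⟨-4770529851795449009510760, 1069124220417542893736680⟩, ⟨2885324891441391168272400, -1268203491506981765368200⟩, ⟨-453097663266667940596000, 399792525353152698778000⟩]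
def gl15 : List GaussianInt := [⟨87218390032014893783040, -21012288942835087073280⟩, ⟨186543196460659068995328, -174287544202386756650496⟩, ⟨363468187363879699026304, -1119401562544599999699328⟩, ⟨-4053508037702672581735552, 1757078892903794100953536⟩, ⟨793213983298064592154496, 9274277809191247657419136⟩, ⟨16528582569425210373409952, -411995744590929125940032⟩, ⟨6334954746490507722412864, -19726158951387177438526336⟩, ⟨-19388139921835073426588192, -1199252270983687905928048⟩, ⟨8559769501729332525800064, 23311505471681511040984128⟩, ⟨6185509130466354686013528, -3952664271451857587714928⟩, ⟨-12407017753188680004528472, -4337985404700365290449848⟩, ⟨2070845928961014849496576, 6289755329287409481223448⟩, ⟨7342464911120016813255184, -2147344493759657687586112⟩, ⟨-1386091704312282534451760, -20993517804492279680320⟩, ⟨-538916000535985598737600, 1230931576938664565576800⟩, ⟨106786277872014755384000, -417448902351338759672000⟩]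
def glX : Fin 16 → List GaussianInt := ![gl0, gl1, gl2, gl3, gl4, gl5, gl6, gl7, gl8, gl9, gl10, gl11, gl12, gl13, gl14, gl15]
def glF : List GaussianInt := [⟨2233988914846853969326080, 846005493737851491133440⟩, ⟨4061684089702971694150656, 1726287347135783080267008⟩, ⟨22080382004245522293198208, -8609966455641922681680256⟩, ⟨-102871979029589577484347584, 26511339639318214561725312⟩, ⟨-16149984684802345213339584, 59446796539980360331293440⟩, ⟨127944659686089543665917440, -76765247354651715217066912⟩, ⟨-150291681680117372075159488, 56038070168892999310883616⟩, ⟨-182907009207369493716776880, 538640032630052830073204032⟩, ⟨564198186381510115146359504, 238495526456139306590533088⟩, ⟨-648945162968893057963415712, -636515475455705296021552632⟩, ⟨-339651659953041524921922328, 3021678571754794478224816⟩, ⟨497638583920732066313944448, 40243372424611741681404168⟩, ⟨-25470430565171717444610312, -115906340684155616713689584⟩, ⟨-245118928171651310025439968, 224927861774724995288225824⟩, ⟨20062026598873842017031520, -12127587873609939762273360⟩, ⟨-299418601839397440184800, -64290686465768824513753600⟩, ⟨5757018750688260278632000, 17484244875704534722024000⟩]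
-- QZ = 2335696215566979477557472884705582902650913924308171956621829734400
-- PZ = 21977764516064691160745573157573670105803016188680992874122444800
-- SZ = 104
section Framework
open Equiv
variable {R : Type*} [CommRing R] {S : Type*} [CommRing S]


theorem permanent_expand {R : Type*} [CommRing R] {n : ℕ}
    (A : Matrix (Fin (n + 1)) (Fin (n + 1)) R) :
    A.permanent = ∑ i : Fin (n + 1), A i 0 * (A.submatrix i.succAbove Fin.succ).permanent := by
  rw [Matrix.permanent, Finset.univ_perm_fin_succ, ← Finset.univ_product_univ]
  simp only [Finset.sum_map, Equiv.toEmbedding_apply, Finset.sum_product, Matrix.submatrix]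
  refine Finset.sum_congr rfl fun i _ => Fin.cases ?_ (fun i => ?_) i
  · simp only [Fin.prod_univ_succ, Matrix.permanent, Finset.mul_sum,
      Equiv.Perm.decomposeFin_symm_apply_zero, Fin.val_zero, one_mul,
      Equiv.Perm.decomposeFin_symm_apply_succ, Fin.succAbove_zero, swap_self,
      Equiv.coe_refl, id, of_apply]
  · rw [← Matrix.permanent_permute_cols i.cycleRange, Matrix.permanent, Finset.mul_sum]
    refine Finset.sum_congr rfl fun σ _ => ?_
    calc
      (∏ i', A (Perm.decomposeFin.symm (Fin.succ i, σ) i') i') =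
          A (Fin.succ i) 0 *
            ∏ i', A ((Fin.succ i).succAbove (Fin.cycleRange i (σ i'))) i'.succ := by
        simp only [Fin.prod_univ_succ, Fin.succAbove_cycleRange,
          Equiv.Perm.decomposeFin_symm_apply_zero, Equiv.Perm.decomposeFin_symm_apply_succ]
      _ = A (Fin.succ i) 0 *
            ∏ i', ((A.submatrix (Fin.succ i).succAbove Fin.succ).submatrix (Fin.cycleRange i) id)
              (σ i') i' := by
        simp only [Matrix.submatrix_apply, id_eq]

variable {R : Type*} [CommRing R]
def EL : (m : ℕ) → (Fin m → R) → (Fin m → R) → ℕ → R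
  | 0, _, _, 0 => 1
  | 0, _, _, _ + 1 => 0
  | m + 1, p, q, 0 => q 0 * EL m (p ∘ Fin.succ) (q ∘ Fin.succ) 0
  | m + 1, p, q, k + 1 =>
      p 0 * EL m (p ∘ Fin.succ) (q ∘ Fin.succ) k +
        q 0 * EL m (p ∘ Fin.succ) (q ∘ Fin.succ) (k + 1)

lemma EL_gt : ∀ (m : ℕ) (p q : Fin m → R) (k : ℕ), m < k → EL m p q k = 0 := by
  intro m
  induction m with
  | zero => intro p q k hk; match k, hk with | k + 1, _ => rfl
  | succ m ih =>
    intro p q k hk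
    match k, hk with
    | k + 1, hk =>
      show _ * EL m _ _ k + _ * EL m _ _ (k + 1) = 0
      rw [ih _ _ k (by omega), ih _ _ (k + 1) (by omega)]; ring

lemma comp_succ_succAbove {m : ℕ} {α : Type*} (p : Fin (m + 2) → α) (i : Fin (m + 1)) :
    (p ∘ (i.succ).succAbove) ∘ Fin.succ = (p ∘ Fin.succ) ∘ i.succAbove := by
  funext j; simp [Function.comp, Fin.succ_succAbove_succ]

lemma comp_succ_succAbove_zero {m : ℕ} {α : Type*} (p : Fin (m + 2) → α) (i : Fin (m + 1)) :
    (p ∘ (i.succ).succAbove) 0 = p 0 := by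
  simp [Function.comp, Fin.succ_succAbove_zero]

lemma EL_sum_q : ∀ (m : ℕ) (p q : Fin (m + 1) → R) (k : ℕ),
    ∑ i, q i * EL m (p ∘ i.succAbove) (q ∘ i.succAbove) k
      = ((m + 1 - k : ℕ) : R) * EL (m + 1) p q k := by
  intro m
  induction m with
  | zero =>
    intro p q k
    rw [Fin.sum_univ_one]
    match k with
    | 0 =>
      show q 0 * 1 = ((1 : ℕ) : R) * (q 0 * EL 0 _ _ 0)
      show q 0 * 1 = ((1 : ℕ) : R) * (q 0 * 1)
      push_cast; ring
    | k + 1 =>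
      have hc : (0 + 1 - (k + 1) : ℕ) = 0 := by omega
      rw [hc]
      show q 0 * (0 : R) = ((0 : ℕ) : R) * (p 0 * EL 0 _ _ k + q 0 * EL 0 _ _ (k + 1))
      push_cast; ring
  | succ m ih =>
    intro p q k
    rcases Nat.lt_or_ge (m + 1) k with hk | hk
    · rw [Finset.sum_congr rfl fun i _ => by
        rw [EL_gt (m + 1) _ _ k hk, mul_zero],
        Finset.sum_const_zero]
      match k, hk with
      | k + 1, hk =>
        have : (m + 1 + 1 - (k + 1) : ℕ) = 0 := by omega
        rw [this, Nat.cast_zero, zero_mul]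
    · rw [Fin.sum_univ_succ]
      have h0 : ∀ (r : Fin (m + 2) → R), r ∘ (0 : Fin (m + 2)).succAbove = r ∘ Fin.succ := by
        intro r; rw [Fin.succAbove_zero]
      rw [h0 p, h0 q]
      match k, hk with
      | 0, _ =>
        have hterm : ∀ i : Fin (m + 1),
            q i.succ * EL (m + 1) (p ∘ (i.succ).succAbove) (q ∘ (i.succ).succAbove) 0
              = q 0 * ((q ∘ Fin.succ) i *
                  EL m ((p ∘ Fin.succ) ∘ i.succAbove) ((q ∘ Fin.succ) ∘ i.succAbove) 0) := by
          intro i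
          show q i.succ * ((q ∘ (i.succ).succAbove) 0 * EL m _ _ 0) = _
          rw [comp_succ_succAbove p, comp_succ_succAbove q, comp_succ_succAbove_zero q]
          simp only [Function.comp_apply]; ring
        rw [Finset.sum_congr rfl fun i _ => hterm i, ← Finset.mul_sum,
          ih (p ∘ Fin.succ) (q ∘ Fin.succ) 0]
        show _ = ((m + 2 : ℕ) : R) * (q 0 * EL (m + 1) _ _ 0)
        push_cast; ring
      | k + 1, hk =>
        have hterm : ∀ i : Fin (m + 1),
            q i.succ * EL (m + 1) (p ∘ (i.succ).succAbove) (q ∘ (i.succ).succAbove) (k + 1)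
              = p 0 * ((q ∘ Fin.succ) i *
                  EL m ((p ∘ Fin.succ) ∘ i.succAbove) ((q ∘ Fin.succ) ∘ i.succAbove) k)
                + q 0 * ((q ∘ Fin.succ) i *
                  EL m ((p ∘ Fin.succ) ∘ i.succAbove) ((q ∘ Fin.succ) ∘ i.succAbove) (k + 1)) := by
          intro i
          show q i.succ * ((p ∘ (i.succ).succAbove) 0 * EL m _ _ k
              + (q ∘ (i.succ).succAbove) 0 * EL m _ _ (k + 1)) = _
          rw [comp_succ_succAbove p, comp_succ_succAbove q, comp_succ_succAbove_zero q,
            comp_succ_succAbove_zero p]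
          simp only [Function.comp_apply]; ring
        rw [Finset.sum_congr rfl fun i _ => hterm i, Finset.sum_add_distrib,
          ← Finset.mul_sum, ← Finset.mul_sum,
          ih (p ∘ Fin.succ) (q ∘ Fin.succ) k, ih (p ∘ Fin.succ) (q ∘ Fin.succ) (k + 1)]
        show q 0 * EL (m + 1) _ _ (k + 1) + _
            = _ * (p 0 * EL (m + 1) _ _ k + q 0 * EL (m + 1) _ _ (k + 1))
        have e1 : (m + 1 - k : ℕ) = (m - k) + 1 := by omega
        have e2 : (m + 1 - (k + 1) : ℕ) = m - k := by omega
        have e3 : (m + 1 + 1 - (k + 1) : ℕ) = (m - k) + 1 := by omega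
        rw [e1, e2, e3]
        push_cast; ring

lemma EL_sum_p : ∀ (m : ℕ) (p q : Fin (m + 1) → R) (k : ℕ),
    ∑ i, p i * EL m (p ∘ i.succAbove) (q ∘ i.succAbove) k
      = ((k + 1 : ℕ) : R) * EL (m + 1) p q (k + 1) := by
  intro m
  induction m with
  | zero =>
    intro p q k
    rw [Fin.sum_univ_one]
    match k with
    | 0 =>
      show p 0 * 1 = _
      show _ = ((1 : ℕ) : R) * (p 0 * EL 0 _ _ 0 + q 0 * EL 0 _ _ 1)
      show p 0 * 1 = ((1 : ℕ) : R) * (p 0 * 1 + q 0 * 0)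
      push_cast; ring
    | k + 1 =>
      show p 0 * (0 : R) = _ * (p 0 * EL 0 _ _ (k + 1) + q 0 * EL 0 _ _ (k + 2))
      show p 0 * (0 : R) = _ * (p 0 * 0 + q 0 * 0)
      ring
  | succ m ih =>
    intro p q k
    rw [Fin.sum_univ_succ]
    have h0 : ∀ (r : Fin (m + 2) → R), r ∘ (0 : Fin (m + 2)).succAbove = r ∘ Fin.succ := by
      intro r; rw [Fin.succAbove_zero]
    rw [h0 p, h0 q]
    match k with
    | 0 =>
      have hterm : ∀ i : Fin (m + 1),
          p i.succ * EL (m + 1) (p ∘ (i.succ).succAbove) (q ∘ (i.succ).succAbove) 0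
            = q 0 * ((p ∘ Fin.succ) i *
                EL m ((p ∘ Fin.succ) ∘ i.succAbove) ((q ∘ Fin.succ) ∘ i.succAbove) 0) := by
        intro i
        show p i.succ * ((q ∘ (i.succ).succAbove) 0 * EL m _ _ 0) = _
        rw [comp_succ_succAbove p, comp_succ_succAbove q, comp_succ_succAbove_zero q]
        show p i.succ * (q 0 * _) = _
        simp only [Function.comp_apply]
        ring
      rw [Finset.sum_congr rfl fun i _ => hterm i, ← Finset.mul_sum,
        ih (p ∘ Fin.succ) (q ∘ Fin.succ) 0]
      show _ = _ * (p 0 * EL (m + 1) _ _ 0 + q 0 * EL (m + 1) _ _ 1)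
      push_cast; ring
    | k + 1 =>
      have hterm : ∀ i : Fin (m + 1),
          p i.succ * EL (m + 1) (p ∘ (i.succ).succAbove) (q ∘ (i.succ).succAbove) (k + 1)
            = p 0 * ((p ∘ Fin.succ) i *
                EL m ((p ∘ Fin.succ) ∘ i.succAbove) ((q ∘ Fin.succ) ∘ i.succAbove) k)
              + q 0 * ((p ∘ Fin.succ) i *
                EL m ((p ∘ Fin.succ) ∘ i.succAbove) ((q ∘ Fin.succ) ∘ i.succAbove) (k + 1)) := by
        intro i
        show p i.succ * ((p ∘ (i.succ).succAbove) 0 * EL m _ _ k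
            + (q ∘ (i.succ).succAbove) 0 * EL m _ _ (k + 1)) = _
        rw [comp_succ_succAbove p, comp_succ_succAbove q, comp_succ_succAbove_zero q,
          comp_succ_succAbove_zero p]
        simp only [Function.comp_apply]
        ring
      rw [Finset.sum_congr rfl fun i _ => hterm i, Finset.sum_add_distrib,
        ← Finset.mul_sum, ← Finset.mul_sum,
        ih (p ∘ Fin.succ) (q ∘ Fin.succ) k, ih (p ∘ Fin.succ) (q ∘ Fin.succ) (k + 1)]
      show p 0 * EL (m + 1) _ _ (k + 1) + _ = _ * (p 0 * EL (m + 1) _ _ (k + 1) + q 0 * EL (m + 1) _ _ (k + 2))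
      push_cast; ring


lemma EL_succ_zero (m : ℕ) (p q : Fin (m + 1) → R) :
    EL (m + 1) p q 0 = q 0 * EL m (p ∘ Fin.succ) (q ∘ Fin.succ) 0 := rfl

lemma EL_succ_succ (m : ℕ) (p q : Fin (m + 1) → R) (k : ℕ) :
    EL (m + 1) p q (k + 1) = p 0 * EL m (p ∘ Fin.succ) (q ∘ Fin.succ) k
      + q 0 * EL m (p ∘ Fin.succ) (q ∘ Fin.succ) (k + 1) := rfl

theorem perR2 : ∀ (m : ℕ) (p q a b : Fin m → R),
    (Matrix.of fun i j => p i * a j + q i * b j).permanent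
      = ∑ k ∈ Finset.range (m + 1),
          ((k.factorial * (m - k).factorial : ℕ) : R) * (EL m p q k * EL m a b k) := by
  intro m
  induction m with
  | zero =>
    intro p q a b
    rw [Matrix.permanent_isEmpty]
    show (1 : R) = ∑ k ∈ Finset.range 1, _
    rw [Finset.sum_range_one]
    show (1 : R) = ((Nat.factorial 0 * Nat.factorial 0 : ℕ) : R) * (1 * 1)
    norm_num
  | succ m ih =>
    intro p q a b
    rw [permanent_expand]
    have hM0 : ∀ i : Fin (m + 1),
        (Matrix.of fun i j => p i * a j + q i * b j) i 0 = p i * a 0 + q i * b 0 := fun i => rfl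
    have hsub : ∀ i : Fin (m + 1),
        ((Matrix.of fun i j => p i * a j + q i * b j).submatrix i.succAbove Fin.succ).permanent
          = ∑ k ∈ Finset.range (m + 1),
              ((k.factorial * (m - k).factorial : ℕ) : R) *
                (EL m (p ∘ i.succAbove) (q ∘ i.succAbove) k
                  * EL m (a ∘ Fin.succ) (b ∘ Fin.succ) k) := by
      intro i
      have : (Matrix.of fun i j => p i * a j + q i * b j).submatrix i.succAbove Fin.succ
          = Matrix.of fun r c => (p ∘ i.succAbove) r * (a ∘ Fin.succ) c
              + (q ∘ i.succAbove) r * (b ∘ Fin.succ) c := rfl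
      rw [this, ih]
    simp only [hM0, hsub]
    -- swap sums
    simp only [Finset.mul_sum]
    rw [Finset.sum_comm]
    -- per-k reduction on the left
    have hL : ∀ k ∈ Finset.range (m + 1),
        ∑ i : Fin (m + 1), (p i * a 0 + q i * b 0) *
            (((k.factorial * (m - k).factorial : ℕ) : R) *
              (EL m (p ∘ i.succAbove) (q ∘ i.succAbove) k
                * EL m (a ∘ Fin.succ) (b ∘ Fin.succ) k))
          = (((k.factorial * (m - k).factorial : ℕ) : R)
                * EL m (a ∘ Fin.succ) (b ∘ Fin.succ) k * a 0)
              * (((k + 1 : ℕ) : R) * EL (m + 1) p q (k + 1))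
            + (((k.factorial * (m - k).factorial : ℕ) : R)
                * EL m (a ∘ Fin.succ) (b ∘ Fin.succ) k * b 0)
              * (((m + 1 - k : ℕ) : R) * EL (m + 1) p q k) := by
      intro k _
      rw [← EL_sum_p m p q k, ← EL_sum_q m p q k, Finset.mul_sum, Finset.mul_sum,
        ← Finset.sum_add_distrib]
      refine Finset.sum_congr rfl fun i _ => ?_
      ring
    rw [Finset.sum_congr rfl hL, Finset.sum_add_distrib]
    -- reorganize the right side
    rw [Finset.sum_range_succ' _ (m + 1)]
    have hRsplit : ∀ k,
        ((((k+1).factorial * (m + 1 - (k+1)).factorial : ℕ) : R)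
            * (EL (m + 1) p q (k + 1) * EL (m + 1) a b (k + 1)))
          = ((((k+1).factorial * (m - k).factorial : ℕ) : R)
              * (EL (m + 1) p q (k + 1) * (a 0 * EL m (a ∘ Fin.succ) (b ∘ Fin.succ) k)))
            + ((((k+1).factorial * (m + 1 - (k+1)).factorial : ℕ) : R)
              * (EL (m + 1) p q (k + 1) * (b 0 * EL m (a ∘ Fin.succ) (b ∘ Fin.succ) (k + 1)))) := by
      intro k
      have h : (m + 1 - (k + 1) : ℕ) = m - k := by omega
      rw [EL_succ_succ m a b k, h]
      ring
    simp only [hRsplit]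
    rw [Finset.sum_add_distrib, add_assoc, EL_succ_zero m a b]
    congr 1
    · -- a-terms
      refine Finset.sum_congr rfl fun k hk => ?_
      rw [Finset.mem_range] at hk
      have h1 : (k + 1).factorial = (k + 1) * k.factorial := Nat.factorial_succ k
      rw [h1]
      push_cast
      ring
    · -- b-terms
      conv_rhs => rw [← Finset.sum_range_succ'
        (fun k => (((k.factorial * (m + 1 - k).factorial : ℕ) : R)
          * (EL (m + 1) p q k * (b 0 * EL m (a ∘ Fin.succ) (b ∘ Fin.succ) k)))) (m + 1)]
      conv_rhs => rw [Finset.sum_range_succ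
        (fun k => (((k.factorial * (m + 1 - k).factorial : ℕ) : R)
          * (EL (m + 1) p q k * (b 0 * EL m (a ∘ Fin.succ) (b ∘ Fin.succ) k)))) (m + 1)]
      have hgm : ((((m+1).factorial * (m + 1 - (m+1)).factorial : ℕ) : R)
          * (EL (m + 1) p q (m+1) * (b 0 * EL m (a ∘ Fin.succ) (b ∘ Fin.succ) (m+1)))) = 0 := by
        rw [EL_gt m _ _ (m+1) (by omega)]
        ring
      rw [hgm, add_zero]
      refine Finset.sum_congr rfl fun k hk => ?_
      rw [Finset.mem_range] at hk
      have h2 : (m + 1 - k : ℕ) = (m - k) + 1 := by omega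
      have h3 : ((m - k) + 1).factorial = ((m - k) + 1) * (m - k).factorial :=
        Nat.factorial_succ _
      rw [h2, h3]
      push_cast
      ring

lemma EL_map (f : R →+* S) : ∀ (m : ℕ) (p q : Fin m → R) (k : ℕ),
    f (EL m p q k) = EL m (f ∘ p) (f ∘ q) k := by
  intro m
  induction m with
  | zero =>
    intro p q k
    match k with
    | 0 => show f 1 = 1; exact map_one f
    | k + 1 => show f 0 = 0; exact map_zero f
  | succ m ih =>
    intro p q k
    match k with
    | 0 =>
      show f (q 0 * EL m _ _ 0) = (f ∘ q) 0 * EL m ((f ∘ p) ∘ Fin.succ) ((f ∘ q) ∘ Fin.succ) 0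
      rw [_root_.map_mul, ih]
      rfl
    | k + 1 =>
      show f (p 0 * EL m _ _ k + q 0 * EL m _ _ (k + 1)) = _
      rw [_root_.map_add, _root_.map_mul, _root_.map_mul, ih, ih]
      rfl

def elvec : List (R × R) → List R
  | [] => [1]
  | x :: l => List.zipWith (fun s t => x.1 * s + x.2 * t) (0 :: elvec l) (elvec l ++ [0])

lemma elvec_length : ∀ l : List (R × R), (elvec l).length = l.length + 1 := by
  intro l
  induction l with
  | nil => rfl
  | cons x l ih =>
    show (List.zipWith _ _ _).length = _
    rw [List.length_zipWith, List.length_cons, List.length_append, ih]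
    simp

lemma getD_append_zero (v : List R) (i : ℕ) : (v ++ [0]).getD i 0 = v.getD i 0 := by
  rcases Nat.lt_or_ge i v.length with h | h
  · rw [List.getD_append _ _ _ _ h]
  · rw [List.getD_eq_default _ _ h, List.getD_append_right _ _ _ _ h]
    rcases (i - v.length) with _ | j <;> rfl

lemma getD_zipWith {f : R → R → R} (xs ys : List R) (h : xs.length = ys.length)
    (i : ℕ) (hi : i < xs.length) :
    (List.zipWith f xs ys).getD i 0 = f (xs.getD i 0) (ys.getD i 0) := by
  have h1 : i < (List.zipWith f xs ys).length := by rw [List.length_zipWith]; omega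
  rw [List.getD_eq_getElem _ _ h1, List.getD_eq_getElem _ _ hi,
    List.getD_eq_getElem _ _ (by omega : i < ys.length), List.getElem_zipWith]

lemma elvec_getD : ∀ (m : ℕ) (p q : Fin m → R) (k : ℕ),
    EL m p q k = (elvec (List.ofFn fun i => (p i, q i))).getD k 0 := by
  intro m
  induction m with
  | zero =>
    intro p q k
    rw [List.ofFn_zero]
    match k with
    | 0 => rfl
    | k + 1 => show (0 : R) = List.getD [1] (k + 1) 0; rfl
  | succ m ih =>
    intro p q k
    rw [List.ofFn_succ]
    show EL (m + 1) p q k = (elvec ((p 0, q 0) :: List.ofFn fun i => (p i.succ, q i.succ))).getD k 0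
    set v : List R := elvec (List.ofFn fun i => (p i.succ, q i.succ)) with hv
    have hlen : v.length = m + 1 := by rw [hv, elvec_length, List.length_ofFn]
    show EL (m + 1) p q k =
      (List.zipWith (fun s t => p 0 * s + q 0 * t) (0 :: v) (v ++ [0])).getD k 0
    have hlen2 : (0 :: v).length = (v ++ [0]).length := by
      simp [hlen]
    rcases Nat.lt_or_ge (m + 1) k with hk | hk
    · rw [EL_gt _ _ _ _ hk, List.getD_eq_default]
      rw [List.length_zipWith]
      simp only [List.length_cons, List.length_append, List.length_singleton, hlen]
      omega
    · have hik : k < (0 :: v).length := by simp [hlen]; omega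
      rw [getD_zipWith _ _ hlen2 _ hik, getD_append_zero]
      match k with
      | 0 =>
        show q 0 * EL m (p ∘ Fin.succ) (q ∘ Fin.succ) 0 = p 0 * (0 : R) + q 0 * _
        rw [ih (p ∘ Fin.succ) (q ∘ Fin.succ) 0]
        show _ = p 0 * 0 + q 0 * v.getD 0 0
        rw [mul_zero, zero_add]
        rfl
      | k + 1 =>
        show p 0 * EL m (p ∘ Fin.succ) (q ∘ Fin.succ) k
            + q 0 * EL m (p ∘ Fin.succ) (q ∘ Fin.succ) (k + 1) = _
        rw [ih (p ∘ Fin.succ) (q ∘ Fin.succ) k, ih (p ∘ Fin.succ) (q ∘ Fin.succ) (k + 1)]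
        show _ = p 0 * v.getD k 0 + q 0 * v.getD (k + 1) 0
        rfl
end Framework
section Concrete
open GaussianInt Complex

noncomputable def cx : Fin 16 → ℂ := fun j => Xmat 0 j
noncomputable def cy : Fin 16 → ℂ := fun j => Xmat 1 j

lemma hgx : cx = ⇑GaussianInt.toComplex ∘ gxL := by
  funext j
  fin_cases j
  · show ((25 : ℝ) : ℂ) + Complex.I * ((30 : ℝ) : ℂ) = GaussianInt.toComplex ⟨25, 30⟩
    rw [GaussianInt.toComplex_def]; push_cast; ring
  · show ((-23 : ℝ) : ℂ) + Complex.I * ((20 : ℝ) : ℂ) = GaussianInt.toComplex ⟨-23, 20⟩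
    rw [GaussianInt.toComplex_def]; push_cast; ring
  · show ((29 : ℝ) : ℂ) + Complex.I * ((51 : ℝ) : ℂ) = GaussianInt.toComplex ⟨29, 51⟩
    rw [GaussianInt.toComplex_def]; push_cast; ring
  · show ((11 : ℝ) : ℂ) + Complex.I * ((-43 : ℝ) : ℂ) = GaussianInt.toComplex ⟨11, -43⟩
    rw [GaussianInt.toComplex_def]; push_cast; ring
  · show ((-20 : ℝ) : ℂ) + Complex.I * ((-11 : ℝ) : ℂ) = GaussianInt.toComplex ⟨-20, -11⟩
    rw [GaussianInt.toComplex_def]; push_cast; ring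
  · show ((47 : ℝ) : ℂ) + Complex.I * ((47 : ℝ) : ℂ) = GaussianInt.toComplex ⟨47, 47⟩
    rw [GaussianInt.toComplex_def]; push_cast; ring
  · show ((18 : ℝ) : ℂ) + Complex.I * ((4 : ℝ) : ℂ) = GaussianInt.toComplex ⟨18, 4⟩
    rw [GaussianInt.toComplex_def]; push_cast; ring
  · show ((29 : ℝ) : ℂ) + Complex.I * ((27 : ℝ) : ℂ) = GaussianInt.toComplex ⟨29, 27⟩
    rw [GaussianInt.toComplex_def]; push_cast; ring
  · show ((35 : ℝ) : ℂ) + Complex.I * ((-26 : ℝ) : ℂ) = GaussianInt.toComplex ⟨35, -26⟩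
    rw [GaussianInt.toComplex_def]; push_cast; ring
  · show ((-25 : ℝ) : ℂ) + Complex.I * ((-2 : ℝ) : ℂ) = GaussianInt.toComplex ⟨-25, -2⟩
    rw [GaussianInt.toComplex_def]; push_cast; ring
  · show ((-32 : ℝ) : ℂ) + Complex.I * ((11 : ℝ) : ℂ) = GaussianInt.toComplex ⟨-32, 11⟩
    rw [GaussianInt.toComplex_def]; push_cast; ring
  · show ((-28 : ℝ) : ℂ) + Complex.I * ((37 : ℝ) : ℂ) = GaussianInt.toComplex ⟨-28, 37⟩
    rw [GaussianInt.toComplex_def]; push_cast; ring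
  · show ((-18 : ℝ) : ℂ) + Complex.I * ((64 : ℝ) : ℂ) = GaussianInt.toComplex ⟨-18, 64⟩
    rw [GaussianInt.toComplex_def]; push_cast; ring
  · show ((25 : ℝ) : ℂ) + Complex.I * ((26 : ℝ) : ℂ) = GaussianInt.toComplex ⟨25, 26⟩
    rw [GaussianInt.toComplex_def]; push_cast; ring
  · show ((12 : ℝ) : ℂ) + Complex.I * ((-28 : ℝ) : ℂ) = GaussianInt.toComplex ⟨12, -28⟩
    rw [GaussianInt.toComplex_def]; push_cast; ring
  · show ((-36 : ℝ) : ℂ) + Complex.I * ((23 : ℝ) : ℂ) = GaussianInt.toComplex ⟨-36, 23⟩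
    rw [GaussianInt.toComplex_def]; push_cast; ring

lemma hgy : cy = ⇑GaussianInt.toComplex ∘ gyL := by
  funext j
  fin_cases j
  · show ((8 : ℝ) : ℂ) + Complex.I * ((0 : ℝ) : ℂ) = GaussianInt.toComplex ⟨8, 0⟩
    rw [GaussianInt.toComplex_def]; push_cast; ring
  · show ((38 : ℝ) : ℂ) + Complex.I * ((20 : ℝ) : ℂ) = GaussianInt.toComplex ⟨38, 20⟩
    rw [GaussianInt.toComplex_def]; push_cast; ring
  · show ((-11 : ℝ) : ℂ) + Complex.I * ((10 : ℝ) : ℂ) = GaussianInt.toComplex ⟨-11, 10⟩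
    rw [GaussianInt.toComplex_def]; push_cast; ring
  · show ((34 : ℝ) : ℂ) + Complex.I * ((4 : ℝ) : ℂ) = GaussianInt.toComplex ⟨34, 4⟩
    rw [GaussianInt.toComplex_def]; push_cast; ring
  · show ((61 : ℝ) : ℂ) + Complex.I * ((28 : ℝ) : ℂ) = GaussianInt.toComplex ⟨61, 28⟩
    rw [GaussianInt.toComplex_def]; push_cast; ring
  · show ((42 : ℝ) : ℂ) + Complex.I * ((12 : ℝ) : ℂ) = GaussianInt.toComplex ⟨42, 12⟩
    rw [GaussianInt.toComplex_def]; push_cast; ring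
  · show ((-23 : ℝ) : ℂ) + Complex.I * ((-46 : ℝ) : ℂ) = GaussianInt.toComplex ⟨-23, -46⟩
    rw [GaussianInt.toComplex_def]; push_cast; ring
  · show ((10 : ℝ) : ℂ) + Complex.I * ((24 : ℝ) : ℂ) = GaussianInt.toComplex ⟨10, 24⟩
    rw [GaussianInt.toComplex_def]; push_cast; ring
  · show ((35 : ℝ) : ℂ) + Complex.I * ((-43 : ℝ) : ℂ) = GaussianInt.toComplex ⟨35, -43⟩
    rw [GaussianInt.toComplex_def]; push_cast; ring
  · show ((24 : ℝ) : ℂ) + Complex.I * ((10 : ℝ) : ℂ) = GaussianInt.toComplex ⟨24, 10⟩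
    rw [GaussianInt.toComplex_def]; push_cast; ring
  · show ((11 : ℝ) : ℂ) + Complex.I * ((-17 : ℝ) : ℂ) = GaussianInt.toComplex ⟨11, -17⟩
    rw [GaussianInt.toComplex_def]; push_cast; ring
  · show ((9 : ℝ) : ℂ) + Complex.I * ((-63 : ℝ) : ℂ) = GaussianInt.toComplex ⟨9, -63⟩
    rw [GaussianInt.toComplex_def]; push_cast; ring
  · show ((13 : ℝ) : ℂ) + Complex.I * ((-23 : ℝ) : ℂ) = GaussianInt.toComplex ⟨13, -23⟩
    rw [GaussianInt.toComplex_def]; push_cast; ring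
  · show ((-9 : ℝ) : ℂ) + Complex.I * ((50 : ℝ) : ℂ) = GaussianInt.toComplex ⟨-9, 50⟩
    rw [GaussianInt.toComplex_def]; push_cast; ring
  · show ((34 : ℝ) : ℂ) + Complex.I * ((-40 : ℝ) : ℂ) = GaussianInt.toComplex ⟨34, -40⟩
    rw [GaussianInt.toComplex_def]; push_cast; ring
  · show ((22 : ℝ) : ℂ) + Complex.I * ((15 : ℝ) : ℂ) = GaussianInt.toComplex ⟨22, 15⟩
    rw [GaussianInt.toComplex_def]; push_cast; ring

lemma hA (i j : Fin 16) : (Xmatᴴ * Xmat) i j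
    = (starRingEnd ℂ) (cx i) * cx j + (starRingEnd ℂ) (cy i) * cy j := by
  simp [Matrix.mul_apply, Fin.sum_univ_two, Matrix.conjTranspose_apply, cx, cy]

lemma hAmat : Xmatᴴ * Xmat
    = Matrix.of (fun i j => ((starRingEnd ℂ) ∘ cx) i * cx j + ((starRingEnd ℂ) ∘ cy) i * cy j) := by
  ext i j
  exact hA i j

lemma hsubmat (i j : Fin 16) : (Xmatᴴ * Xmat).submatrix i.succAbove j.succAbove
    = Matrix.of (fun r c => ((starRingEnd ℂ) ∘ cx ∘ i.succAbove) r * (cx ∘ j.succAbove) c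
        + ((starRingEnd ℂ) ∘ cy ∘ i.succAbove) r * (cy ∘ j.succAbove) c) := by
  ext r c
  exact hA _ _

noncomputable def cc (j : Fin 16) (k : ℕ) : ℂ := EL 15 (cx ∘ j.succAbove) (cy ∘ j.succAbove) k
noncomputable def cF (k : ℕ) : ℂ := EL 16 cx cy k

lemma hper : (Xmatᴴ * Xmat).permanent
    = ∑ k ∈ Finset.range (16 + 1), ((k.factorial * (16 - k).factorial : ℕ) : ℂ)
        * ((starRingEnd ℂ) (cF k) * cF k) := by
  rw [hAmat, perR2 16 ((starRingEnd ℂ) ∘ cx) ((starRingEnd ℂ) ∘ cy) cx cy]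
  refine Finset.sum_congr rfl fun k _ => ?_
  rw [← EL_map (starRingEnd ℂ) 16 cx cy k]
  rfl

lemma hFmat (i j : Fin 16) : Fmat (Xmatᴴ * Xmat) i j
    = ((starRingEnd ℂ) (cx i) * cx j + (starRingEnd ℂ) (cy i) * cy j)
      * ∑ k ∈ Finset.range (15 + 1), ((k.factorial * (15 - k).factorial : ℕ) : ℂ)
          * ((starRingEnd ℂ) (cc i k) * cc j k) := by
  show (Xmatᴴ * Xmat) i j * ((Xmatᴴ * Xmat).submatrix i.succAbove j.succAbove).permanent = _
  rw [hA i j, hsubmat i j,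
    perR2 15 ((starRingEnd ℂ) ∘ cx ∘ i.succAbove) ((starRingEnd ℂ) ∘ cy ∘ i.succAbove)
      (cx ∘ j.succAbove) (cy ∘ j.succAbove)]
  congr 1
  refine Finset.sum_congr rfl fun k _ => ?_
  rw [show (starRingEnd ℂ) (cc i k) = EL 15 ((starRingEnd ℂ) ∘ cx ∘ i.succAbove)
      ((starRingEnd ℂ) ∘ cy ∘ i.succAbove) k from
    (EL_map (starRingEnd ℂ) 15 (cx ∘ i.succAbove) (cy ∘ i.succAbove) k)]
  rfl

lemma quad_id {n : ℕ} (v x y : Fin n → ℂ) (c : Fin n → ℕ → ℂ) (w : ℕ → ℂ) (K : Finset ℕ)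
    (hv : ∀ i, (starRingEnd ℂ) (v i) = v i) :
    ∑ i, ∑ j, (v i * v j) * (((starRingEnd ℂ) (x i) * x j + (starRingEnd ℂ) (y i) * y j)
        * ∑ k ∈ K, w k * ((starRingEnd ℂ) (c i k) * c j k))
      = ∑ k ∈ K, w k *
          ((starRingEnd ℂ) (∑ j, v j * x j * c j k) * (∑ j, v j * x j * c j k)
            + (starRingEnd ℂ) (∑ j, v j * y j * c j k) * (∑ j, v j * y j * c j k)) := by
  have L1 : ∀ i j : Fin n, (v i * v j) * (((starRingEnd ℂ) (x i) * x j
        + (starRingEnd ℂ) (y i) * y j) * ∑ k ∈ K, w k * ((starRingEnd ℂ) (c i k) * c j k))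
      = ∑ k ∈ K, (w k * ((v i * (starRingEnd ℂ) (x i) * (starRingEnd ℂ) (c i k))
            * (v j * x j * c j k))
          + w k * ((v i * (starRingEnd ℂ) (y i) * (starRingEnd ℂ) (c i k))
            * (v j * y j * c j k))) := by
    intro i j
    simp only [Finset.mul_sum]
    exact Finset.sum_congr rfl fun k _ => by ring
  rw [Finset.sum_congr rfl fun i (_ : i ∈ Finset.univ) =>
    Finset.sum_congr rfl fun j (_ : j ∈ Finset.univ) => L1 i j]
  rw [Finset.sum_congr rfl fun i (_ : i ∈ Finset.univ) =>
    Finset.sum_comm (s := (Finset.univ : Finset (Fin n))) (t := K)]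
  rw [Finset.sum_comm]
  refine Finset.sum_congr rfl fun k _ => ?_
  simp only [map_sum, _root_.map_mul, hv]
  rw [Finset.sum_mul_sum, Finset.sum_mul_sum]
  rw [mul_add, Finset.mul_sum, Finset.mul_sum, ← Finset.sum_add_distrib]
  refine Finset.sum_congr rfl fun i _ => ?_
  rw [Finset.mul_sum, Finset.mul_sum, ← Finset.sum_add_distrib]

def gS (gz : Fin 16 → GaussianInt) (k : ℕ) : GaussianInt :=
  ∑ j : Fin 16, ((gvL j : ℤ) : GaussianInt) * gz j * ((glX j).getD k 0)

lemma hglX : ∀ j : Fin 16,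
    elvec (List.ofFn fun i => ((gxL ∘ j.succAbove) i, (gyL ∘ j.succAbove) i)) = glX j := by
  decide

lemma hglF : elvec (List.ofFn fun i => (gxL i, gyL i)) = glF := by decide

lemma hcc (j : Fin 16) (k : ℕ) :
    cc j k = GaussianInt.toComplex ((glX j).getD k 0) := by
  unfold cc
  rw [hgx, hgy]
  show EL 15 (⇑GaussianInt.toComplex ∘ (gxL ∘ j.succAbove))
      (⇑GaussianInt.toComplex ∘ (gyL ∘ j.succAbove)) k = _
  rw [← EL_map GaussianInt.toComplex 15 (gxL ∘ j.succAbove) (gyL ∘ j.succAbove) k,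
    elvec_getD 15 (gxL ∘ j.succAbove) (gyL ∘ j.succAbove) k, hglX j]

lemma hcF (k : ℕ) : cF k = GaussianInt.toComplex (glF.getD k 0) := by
  unfold cF
  rw [hgx, hgy, ← EL_map GaussianInt.toComplex 16 gxL gyL k,
    elvec_getD 16 gxL gyL k, hglF]

noncomputable def Sx (k : ℕ) : ℂ := ∑ j : Fin 16, ((gvL j : ℤ) : ℂ) * cx j * cc j k
noncomputable def Sy (k : ℕ) : ℂ := ∑ j : Fin 16, ((gvL j : ℤ) : ℂ) * cy j * cc j k

lemma hSx (k : ℕ) : Sx k = GaussianInt.toComplex (gS gxL k) := by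
  unfold Sx gS
  rw [map_sum]
  refine Finset.sum_congr rfl fun j _ => ?_
  rw [_root_.map_mul, _root_.map_mul, map_intCast, hcc, hgx]
  rfl

lemma hSy (k : ℕ) : Sy k = GaussianInt.toComplex (gS gyL k) := by
  unfold Sy gS
  rw [map_sum]
  refine Finset.sum_congr rfl fun j _ => ?_
  rw [_root_.map_mul, _root_.map_mul, map_intCast, hcc, hgy]
  rfl

lemma conj_mul_toComplex (g : GaussianInt) :
    (starRingEnd ℂ) (GaussianInt.toComplex g) * GaussianInt.toComplex g
      = GaussianInt.toComplex (star g * g) := by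
  rw [_root_.map_mul, GaussianInt.toComplex_star]

/-- the quadratic form as an integer -/
def QZ : ℤ := ∑ k ∈ Finset.range (15 + 1), ((k.factorial * (15 - k).factorial : ℕ) : ℤ)
    * ((star (gS gxL k) * gS gxL k).re + (star (gS gyL k) * gS gyL k).re)

/-- the permanent as an integer -/
def PZ : ℤ := ∑ k ∈ Finset.range (16 + 1), ((k.factorial * (16 - k).factorial : ℕ) : ℤ)
    * (star (glF.getD k 0) * glF.getD k 0).re

/-- squared norm of v as an integer -/
def SZ : ℤ := ∑ i : Fin 16, (gvL i) ^ 2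

lemma hQform :
    (∑ i : Fin 16, ∑ j : Fin 16, ((gvL i : ℤ) : ℝ) * (Fmat (Xmatᴴ * Xmat) i j).re
        * ((gvL j : ℤ) : ℝ)) = (QZ : ℝ) := by
  have step1 : (∑ i : Fin 16, ∑ j : Fin 16, ((gvL i : ℤ) : ℝ) * (Fmat (Xmatᴴ * Xmat) i j).re
        * ((gvL j : ℤ) : ℝ))
      = (∑ i : Fin 16, ∑ j : Fin 16, (((gvL i : ℤ) : ℂ) * ((gvL j : ℤ) : ℂ))
          * Fmat (Xmatᴴ * Xmat) i j).re := by
    rw [Complex.re_sum]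
    refine Finset.sum_congr rfl fun i _ => ?_
    rw [Complex.re_sum]
    refine Finset.sum_congr rfl fun j _ => ?_
    rw [show (((gvL i : ℤ) : ℂ) * ((gvL j : ℤ) : ℂ))
        = ((((gvL i : ℤ) : ℝ) * ((gvL j : ℤ) : ℝ) : ℝ) : ℂ) by push_cast; ring,
      Complex.re_ofReal_mul]
    ring
  rw [step1]
  have step2 : (∑ i : Fin 16, ∑ j : Fin 16, (((gvL i : ℤ) : ℂ) * ((gvL j : ℤ) : ℂ))
        * Fmat (Xmatᴴ * Xmat) i j)
      = ∑ k ∈ Finset.range (15 + 1), ((k.factorial * (15 - k).factorial : ℕ) : ℂ) *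
          ((starRingEnd ℂ) (Sx k) * Sx k + (starRingEnd ℂ) (Sy k) * Sy k) := by
    simp only [hFmat]
    exact quad_id (fun i => ((gvL i : ℤ) : ℂ)) cx cy cc
      (fun k => ((k.factorial * (15 - k).factorial : ℕ) : ℂ)) (Finset.range (15 + 1))
      (fun i => map_intCast (starRingEnd ℂ) (gvL i))
  rw [step2, Complex.re_sum, QZ]
  push_cast
  refine Finset.sum_congr rfl fun k _ => ?_
  rw [hSx, hSy, conj_mul_toComplex, conj_mul_toComplex,
    show ((((k.factorial : ℕ) : ℂ)) * (((15 - k).factorial : ℕ) : ℂ))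
        = ((((k.factorial * (15 - k).factorial : ℕ) : ℝ)) : ℂ) by push_cast; ring]
  rw [Complex.re_ofReal_mul]
  rw [Complex.add_re, ← GaussianInt.intCast_re, ← GaussianInt.intCast_re]
  push_cast
  ring

lemma hperZ : (Xmatᴴ * Xmat).permanent.re = (PZ : ℝ) := by
  rw [hper, Complex.re_sum, PZ]
  push_cast
  refine Finset.sum_congr rfl fun k _ => ?_
  rw [hcF, conj_mul_toComplex,
    show ((((k.factorial : ℕ) : ℂ)) * (((16 - k).factorial : ℕ) : ℂ))
        = ((((k.factorial * (16 - k).factorial : ℕ) : ℝ)) : ℂ) by push_cast; ring]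
  rw [Complex.re_ofReal_mul, ← GaussianInt.intCast_re]
  push_cast
  ring

lemma hvnorm : (∑ i : Fin 16, ((gvL i : ℤ) : ℝ) ^ 2) = (SZ : ℝ) := by
  rw [SZ]
  push_cast
  rfl

lemma keyineq : (PZ * SZ : ℤ) < QZ := by decide

end Concrete

/-- The `16 × 16` matrix `A = X* X` is positive semidefinite Hermitian and there
is a real vector `v ∈ ℝ¹⁶` with `∑ i j, v i · Re((F_A) i j) · v j > per(A) · ‖v‖₂²`;
equivalently, the largest eigenvalue of `Re(F_A)` strictly exceeds `per(A)`. -/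
theorem stmt10 :
    (Xmatᴴ * Xmat).PosSemidef ∧
      ∃ v : Fin 16 → ℝ,
        (∑ i, ∑ j, v i * (Fmat (Xmatᴴ * Xmat) i j).re * v j) >
          (Xmatᴴ * Xmat).permanent.re * ∑ i, (v i) ^ 2 := by
  constructor
  · exact Matrix.posSemidef_conjTranspose_mul_self Xmat
  · refine ⟨fun i => ((gvL i : ℤ) : ℝ), ?_⟩
    rw [hQform, hperZ, hvnorm, ← Int.cast_mul]
    exact_mod_cast keyineq
end

section
/- If A ∈ H_n (with n ≥ 1), then the matrix F_A is also positive semidefinite Hermitian, i.e. F_A ∈ H_n. -/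
open Matrix Finset
open scoped ComplexOrder

lemma sum_perm_prod_eq_permanent {n : ℕ} (M : Matrix (Fin n) (Fin n) ℂ)
    (σ : Equiv.Perm (Fin n)) :
    ∑ τ : Equiv.Perm (Fin n), ∏ m, M (σ m) (τ m) = M.permanent := by
  rw [← Matrix.permanent_transpose]
  unfold Matrix.permanent
  refine Fintype.sum_equiv (Equiv.mulRight σ⁻¹) _ _ fun τ => ?_
  rw [← Equiv.prod_comp σ fun i => Mᵀ (((Equiv.mulRight σ⁻¹) τ) i) i]
  refine Finset.prod_congr rfl fun m _ => ?_
  simp [Matrix.transpose_apply, Equiv.Perm.mul_apply]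

/-- If `A` is positive semidefinite Hermitian, then so is `F_A`. -/
theorem stmt11 {n : ℕ} (A : Matrix (Fin (n + 1)) (Fin (n + 1)) ℂ) (hA : A.PosSemidef) :
    (Fmat A).PosSemidef := by
  obtain ⟨B, hB⟩ : ∃ B : Matrix (Fin (n + 1)) (Fin (n + 1)) ℂ, A = Bᴴ * B := by
    open scoped MatrixOrder in
    obtain ⟨X, hX, -, hXA⟩ :=
      CFC.exists_sqrt_of_isSelfAdjoint_of_quasispectrumRestricts hA.isHermitian
        (QuasispectrumRestricts.nnreal_of_nonneg hA.nonneg)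
    exact ⟨X, by rw [← hXA, ← Matrix.star_eq_conjTranspose, hX.star_eq]⟩
  have hA' : ∀ x y, A x y = ∑ k, (starRingEnd ℂ) (B k x) * B k y := by
    intro x y
    rw [hB, Matrix.mul_apply]
    simp [Matrix.conjTranspose_apply]
  set c : ℂ := (((Real.sqrt n.factorial)⁻¹ : ℝ) : ℂ) with hc
  set C : Matrix (Fin (n + 1) × (Fin n → Fin (n + 1))) (Fin (n + 1)) ℂ :=
    Matrix.of fun p j =>
      c * B p.1 j * ∑ σ : Equiv.Perm (Fin n), ∏ m, B (p.2 m) (j.succAbove (σ m)) with hC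
  have key : Fmat A = Cᴴ * C := by
    ext i j
    rw [Matrix.mul_apply]
    rw [Fintype.sum_prod_type]
    have expand : ∀ (k : Fin (n+1)) (t : Fin n → Fin (n+1)),
        Cᴴ i (k, t) * C (k, t) j =
        ((starRingEnd ℂ) c * c) * ((starRingEnd ℂ) (B k i) * B k j) *
          (∑ σ : Equiv.Perm (Fin n), ∑ τ : Equiv.Perm (Fin n),
            ∏ m, (starRingEnd ℂ) (B (t m) (i.succAbove (σ m))) * B (t m) (j.succAbove (τ m))) := by
      intro k t
      simp only [hC, Matrix.conjTranspose_apply, Matrix.of_apply, ← starRingEnd_apply,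
        _root_.map_mul, _root_.map_sum, _root_.map_prod, Finset.prod_mul_distrib, ← Finset.sum_mul_sum]
      ring
    simp only [expand]
    have hsum : ∀ k : Fin (n+1),
        ∑ t : Fin n → Fin (n+1),
          ((starRingEnd ℂ) c * c) * ((starRingEnd ℂ) (B k i) * B k j) *
            (∑ σ : Equiv.Perm (Fin n), ∑ τ : Equiv.Perm (Fin n),
              ∏ m, (starRingEnd ℂ) (B (t m) (i.succAbove (σ m))) * B (t m) (j.succAbove (τ m))) =
        ((starRingEnd ℂ) c * c) * ((starRingEnd ℂ) (B k i) * B k j) *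
          ((n.factorial : ℂ) * (A.submatrix i.succAbove j.succAbove).permanent) := by
      intro k
      rw [← Finset.mul_sum]
      congr 1
      rw [Finset.sum_comm]
      have swap2 : ∀ σ : Equiv.Perm (Fin n),
          ∑ t : Fin n → Fin (n+1), ∑ τ : Equiv.Perm (Fin n),
            ∏ m, (starRingEnd ℂ) (B (t m) (i.succAbove (σ m))) * B (t m) (j.succAbove (τ m)) =
          ∑ τ : Equiv.Perm (Fin n),
            ∏ m, A (i.succAbove (σ m)) (j.succAbove (τ m)) := by
        intro σ
        rw [Finset.sum_comm]
        refine Finset.sum_congr rfl fun τ _ => ?_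
        have := Finset.prod_univ_sum (fun _ : Fin n => (Finset.univ : Finset (Fin (n+1))))
          (fun m s => (starRingEnd ℂ) (B s (i.succAbove (σ m))) * B s (j.succAbove (τ m)))
        rw [Fintype.piFinset_univ] at this
        rw [← this]
        refine Finset.prod_congr rfl fun m _ => ?_
        rw [hA']
      simp only [swap2]
      have perσ : ∀ σ : Equiv.Perm (Fin n),
          ∑ τ : Equiv.Perm (Fin n), ∏ m, A (i.succAbove (σ m)) (j.succAbove (τ m)) =
          (A.submatrix i.succAbove j.succAbove).permanent := by
        intro σ
        exact sum_perm_prod_eq_permanent (A.submatrix i.succAbove j.succAbove) σ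
      simp only [perσ]
      rw [Finset.sum_const, Finset.card_univ, Fintype.card_perm]
      simp [mul_comm]
    simp only [hsum]
    rw [← Finset.sum_mul]
    have hcc : (starRingEnd ℂ) c * c * (n.factorial : ℂ) = 1 := by
      have h1 : ((Real.sqrt n.factorial)⁻¹ : ℝ) * ((Real.sqrt n.factorial)⁻¹ : ℝ)
          = ((n.factorial : ℝ))⁻¹ := by
        rw [← mul_inv, Real.mul_self_sqrt (by positivity)]
      rw [hc, Complex.conj_ofReal, ← Complex.ofReal_mul, h1,
        show ((n.factorial : ℂ)) = ((n.factorial : ℝ) : ℂ) by push_cast; ring,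
        ← Complex.ofReal_mul, inv_mul_cancel₀ (by positivity), Complex.ofReal_one]
    rw [← Finset.mul_sum]
    have goal2 : Fmat A i j =
        (∑ k, (starRingEnd ℂ) (B k i) * B k j) *
          (A.submatrix i.succAbove j.succAbove).permanent := by
      rw [Fmat, Matrix.of_apply, hA']
    rw [goal2]
    linear_combination (-((∑ k, (starRingEnd ℂ) (B k i) * B k j) *
      (A.submatrix i.succAbove j.succAbove).permanent)) * hcc
  rw [key]
  exact Matrix.posSemidef_conjTranspose_mul_self C
end
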